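/- arXiv:2106.13969 — 5 statements merged into one kernel-verified Lean document; each statement's English description precedes it below -/
import Mathlib

section
/- Let n ≥ 1 and let k be an integer with gcd(k,n) = 1. Then the pair (w̄_n^k, s̄_n) is conjugate in PGL_n(ℂ) to the pair (s̄_n, w̄_n^{-k}); that is, there exists g ∈ GL_n(ℂ) and scalars λ, μ ∈ ℂ^× with g·w_n^k·g^{-1} = λ·s_n and g·s_n·g^{-1} = μ·w_n^{-k}. -/
/-- `PGL_n(ℂ)`: the quotient of `GL_n(ℂ)` by its center (the nonzero scalar matrices). -/
abbrev PGLn (n : ℕ) : Type :=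
  GL (Fin n) ℂ ⧸ Subgroup.center (GL (Fin n) ℂ)

/-- The permutation matrix `w_n` of the `n`-cycle: `w_n · e_j = e_{j+1}`, indices mod `n`. -/
def cycleMat (n : ℕ) [NeZero n] : Matrix (Fin n) (Fin n) ℂ :=
  Matrix.of fun i j : Fin n => if i = j + 1 then 1 else 0

/-- The diagonal matrix `s_n = diag(1, ζ, ζ², …, ζ^{n-1})`. -/
def diagZeta (n : ℕ) (ζ : ℂ) : Matrix (Fin n) (Fin n) ℂ :=
  Matrix.diagonal fun j : Fin n => ζ ^ (j : ℕ)

/-- An element of `PGL_n(ℂ)` is semisimple if it is the image of a diagonalizable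
(invertible) matrix. -/
def IsSemisimplePGL (n : ℕ) (x : PGLn n) : Prop :=
  ∃ A : GL (Fin n) ℂ,
    (∃ g : GL (Fin n) ℂ, ((g * A * g⁻¹ : GL (Fin n) ℂ) : Matrix (Fin n) (Fin n) ℂ).IsDiag) ∧
    QuotientGroup.mk A = x

open Fin.NatCast

private lemma zpow_congr_mod {n : ℕ} [NeZero n] {ζ : ℂ} (hζ : IsPrimitiveRoot ζ n)
    {x y : ℤ} (h : x ≡ y [ZMOD (n : ℤ)]) : ζ ^ x = ζ ^ y := by
  have hne : ζ ≠ 0 := hζ.ne_zero (NeZero.ne n)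
  obtain ⟨t, ht⟩ := h.dvd
  have hx : x = y + (n : ℤ) * (-t) := by linear_combination -ht
  rw [hx, zpow_add₀ hne, zpow_mul, zpow_natCast, hζ.pow_eq_one, one_zpow, mul_one]

private lemma sum_zpow_orth {n : ℕ} [NeZero n] {ζ : ℂ} (hζ : IsPrimitiveRoot ζ n) (c : ℤ) :
    ∑ j : Fin n, ζ ^ (c * (j : ℕ)) = if (n : ℤ) ∣ c then (n : ℂ) else 0 := by
  have hxi : ∀ j : ℕ, ζ ^ (c * j) = (ζ ^ c) ^ j := fun j => by
    rw [zpow_mul, zpow_natCast]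
  simp_rw [hxi]
  rw [Fin.sum_univ_eq_sum_range (fun j => (ζ ^ c) ^ j) n]
  by_cases h : (n : ℤ) ∣ c
  · have h1 : ζ ^ c = 1 := (hζ.zpow_eq_one_iff_dvd c).2 h
    simp [h1, h]
  · have h1 : ζ ^ c ≠ 1 := fun hh => h ((hζ.zpow_eq_one_iff_dvd c).1 hh)
    rw [geom_sum_eq h1, if_neg h]
    have h2 : (ζ ^ c) ^ n = 1 := by
      rw [← zpow_natCast (ζ ^ c) n, ← zpow_mul, mul_comm, zpow_mul, zpow_natCast,
        hζ.pow_eq_one, one_zpow]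
    rw [h2]
    simp

private lemma cycleMat_pow (n : ℕ) [NeZero n] (m : ℕ) :
    (cycleMat n) ^ m = Matrix.of fun i j : Fin n => if i = j + (m : Fin n) then 1 else 0 := by
  induction m with
  | zero =>
    ext i j
    simp [Matrix.one_apply, eq_comm]
  | succ m ih =>
    ext i j
    rw [pow_succ, ih, Matrix.mul_apply]
    simp only [Matrix.of_apply, cycleMat]
    have hterm : ∀ t : Fin n,
        (if i = t + (m : Fin n) then (1 : ℂ) else 0) * (if t = j + 1 then 1 else 0)
          = if t = j + 1 then (if i = t + (m : Fin n) then 1 else 0) else 0 := by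
      intro t
      by_cases h : t = j + 1 <;> simp [h]
    rw [Finset.sum_congr rfl fun t _ => hterm t, Finset.sum_ite_eq' Finset.univ (j + 1)
      (fun t => if i = t + (m : Fin n) then (1 : ℂ) else 0), if_pos (Finset.mem_univ _)]
    have hcast : ((m + 1 : ℕ) : Fin n) = (m : Fin n) + 1 := by push_cast; ring_nf
    have harr : j + 1 + (m : Fin n) = j + ((m : Fin n) + 1) := by abel
    rw [harr, hcast]

private lemma cycleMat_pow_n (n : ℕ) [NeZero n] : (cycleMat n) ^ n = 1 := by
  rw [cycleMat_pow]
  ext i j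
  simp [Matrix.one_apply, Fin.natCast_self]

/-- `(j + (c : Fin n)).val ≡ j.val + c  [ZMOD n]`. -/
private lemma fin_add_cast_modeq (n : ℕ) [NeZero n] (j : Fin n) (c : ℕ) :
    (((j + (c : Fin n)) : Fin n) : ℤ) ≡ ((j : ℕ) : ℤ) + (c : ℤ) [ZMOD (n : ℤ)] := by
  have h1 : ((j + (c : Fin n)) : Fin n).val = (j.val + c % n) % n := by
    rw [Fin.add_def, Fin.val_natCast]
  have ha : (((j.val : ℤ) + (c : ℤ) % n)) ≡ (((j + (c : Fin n)) : Fin n).val : ℤ)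
      [ZMOD (n : ℤ)] := by
    show _ % _ = _ % _
    rw [h1]
    push_cast
    exact (Int.emod_emod_of_dvd _ dvd_rfl).symm
  have hc : ((c : ℤ) % n) ≡ (c : ℤ) [ZMOD (n : ℤ)] := Int.emod_emod_of_dvd _ dvd_rfl
  exact ha.symm.trans ((Int.ModEq.refl ((j.val : ℤ))).add hc)

/-- `(i - (c : Fin n)).val ≡ i.val - c  [ZMOD n]`. -/
private lemma fin_sub_cast_modeq (n : ℕ) [NeZero n] (i : Fin n) (c : ℕ) :
    (((i - (c : Fin n)) : Fin n) : ℤ) ≡ ((i : ℕ) : ℤ) - (c : ℤ) [ZMOD (n : ℤ)] := by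
  set u : Fin n := i - (c : Fin n) with hu
  have hadd : u + (c : Fin n) = i := by rw [hu]; abel
  have h1 : (u.val : ℤ) + (c : ℤ) ≡ ((i : ℕ) : ℤ) [ZMOD (n : ℤ)] := by
    have := fin_add_cast_modeq n u c
    rw [hadd] at this
    exact this.symm
  have := h1.sub (Int.ModEq.refl (c : ℤ))
  simpa using this

/-- Let `n ≥ 1` and let `k` be an integer with `gcd(k,n) = 1`.  Then the pair
`(w̄_n^k, s̄_n)` is conjugate in `PGL_n(ℂ)` to the pair `(s̄_n, w̄_n^{-k})`; that is, there
exist `g ∈ GL_n(ℂ)` and scalars `λ, μ ∈ ℂˣ` with `g w_n^k g⁻¹ = λ s_n` and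
`g s_n g⁻¹ = μ w_n^{-k}`. -/
theorem stmt4 (n : ℕ) [NeZero n] (ζ : ℂ) (hζ : IsPrimitiveRoot ζ n)
    (S W : GL (Fin n) ℂ)
    (hS : (S : Matrix (Fin n) (Fin n) ℂ) = diagZeta n ζ)
    (hW : (W : Matrix (Fin n) (Fin n) ℂ) = cycleMat n)
    (k : ℤ) (hk : Int.gcd k n = 1) :
    ∃ (g : GL (Fin n) ℂ) (lam mu : ℂˣ),
      ((g * W ^ k * g⁻¹ : GL (Fin n) ℂ) : Matrix (Fin n) (Fin n) ℂ)
          = (lam : ℂ) • (S : Matrix (Fin n) (Fin n) ℂ) ∧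
      ((g * S * g⁻¹ : GL (Fin n) ℂ) : Matrix (Fin n) (Fin n) ℂ)
          = (mu : ℂ) • ((W ^ (-k) : GL (Fin n) ℂ) : Matrix (Fin n) (Fin n) ℂ) := by
  have hne : ζ ≠ 0 := hζ.ne_zero (NeZero.ne n)
  have hnpos : 0 < n := Nat.pos_of_ne_zero (NeZero.ne n)
  have hn0 : (n : ℤ) ≠ 0 := by exact_mod_cast (NeZero.ne n)
  have hnC : (n : ℂ) ≠ 0 := by exact_mod_cast (NeZero.ne n)
  -- Bezout coefficient
  set a : ℤ := Int.gcdA k (n : ℤ) with ha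
  have hbez : 1 = k * a + (n : ℤ) * Int.gcdB k (n : ℤ) := by
    have h := Int.gcd_eq_gcd_ab k (n : ℤ)
    rw [hk] at h
    exact_mod_cast h
  -- coprimality of `a` and `n`
  have hcop : IsCoprime ((n : ℤ)) a := ⟨Int.gcdB k (n : ℤ), k, by linear_combination -hbez⟩
  -- reduced exponents
  set m : ℕ := (k % (n : ℤ)).toNat with hm
  set m' : ℕ := ((-k) % (n : ℤ)).toNat with hm'
  have hmval : ((m : ℤ)) = k % (n : ℤ) := Int.toNat_of_nonneg (Int.emod_nonneg k hn0)
  have hm'val : ((m' : ℤ)) = (-k) % (n : ℤ) := Int.toNat_of_nonneg (Int.emod_nonneg (-k) hn0)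
  have hmmod : (m : ℤ) ≡ k [ZMOD (n : ℤ)] := by
    rw [hmval]; exact Int.emod_emod_of_dvd k dvd_rfl
  have hm'mod : (m' : ℤ) ≡ -k [ZMOD (n : ℤ)] := by
    rw [hm'val]; exact Int.emod_emod_of_dvd (-k) dvd_rfl
  -- `a * m ≡ 1` and `a * m' ≡ -1` mod n
  have ham : a * (m : ℤ) ≡ 1 [ZMOD (n : ℤ)] := by
    have h1 : a * (m : ℤ) ≡ a * k [ZMOD (n : ℤ)] := hmmod.mul_left a
    refine h1.trans ?_
    show _ % _ = _ % _
    have : a * k = 1 + (n : ℤ) * (-(Int.gcdB k (n : ℤ))) := by linear_combination -hbez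
    rw [this, Int.add_mul_emod_self_left]
  have ham' : a * (m' : ℤ) ≡ -1 [ZMOD (n : ℤ)] := by
    have h1 : a * (m' : ℤ) ≡ a * (-k) [ZMOD (n : ℤ)] := hm'mod.mul_left a
    refine h1.trans ?_
    show _ % _ = _ % _
    have : a * (-k) = -1 + (n : ℤ) * (Int.gcdB k (n : ℤ)) := by linear_combination hbez
    rw [this, Int.add_mul_emod_self_left]
  -- the Fourier-type matrix and its inverse
  set A : Matrix (Fin n) (Fin n) ℂ :=
    Matrix.of (fun i j : Fin n => ζ ^ (a * (i : ℕ) * (j : ℕ))) with hA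
  set B : Matrix (Fin n) (Fin n) ℂ :=
    Matrix.of (fun i j : Fin n => (n : ℂ)⁻¹ * ζ ^ (-(a * (i : ℕ) * (j : ℕ)))) with hB
  have hBA : B * A = 1 := by
    ext i l
    rw [Matrix.mul_apply]
    simp only [hA, hB, Matrix.of_apply]
    have hterm : ∀ j : Fin n,
        (n : ℂ)⁻¹ * ζ ^ (-(a * (i : ℕ) * (j : ℕ))) * ζ ^ (a * (j : ℕ) * (l : ℕ))
          = (n : ℂ)⁻¹ * ζ ^ ((a * (((l : ℕ) : ℤ) - ((i : ℕ) : ℤ))) * ((j : ℕ) : ℤ)) := by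
      intro j
      rw [mul_assoc, ← zpow_add₀ hne]
      congr 1
      ring_nf
    rw [Finset.sum_congr rfl fun j _ => hterm j, ← Finset.mul_sum, sum_zpow_orth hζ]
    by_cases h : i = l
    · subst h
      rw [if_pos (by simp), Matrix.one_apply_eq, inv_mul_cancel₀ hnC]
    · rw [if_neg, mul_zero, Matrix.one_apply_ne h]
      intro hdvd
      have hdl : (n : ℤ) ∣ (((l : ℕ) : ℤ) - ((i : ℕ) : ℤ)) := hcop.dvd_of_dvd_mul_left hdvd
      obtain ⟨t, ht⟩ := hdl
      have hi : ((i : ℕ) : ℤ) < n := by exact_mod_cast i.isLt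
      have hl : ((l : ℕ) : ℤ) < n := by exact_mod_cast l.isLt
      have hi0 : (0 : ℤ) ≤ ((i : ℕ) : ℤ) := by positivity
      have hl0 : (0 : ℤ) ≤ ((l : ℕ) : ℤ) := by positivity
      have hnz : (0 : ℤ) < n := by exact_mod_cast hnpos
      have ht0 : t = 0 := by
        rcases lt_trichotomy t 0 with h' | h' | h'
        · nlinarith
        · exact h'
        · nlinarith
      apply h
      rw [ht0, mul_zero] at ht
      have : ((i : ℕ) : ℤ) = ((l : ℕ) : ℤ) := by omega
      exact Fin.ext (by exact_mod_cast this)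
  have hAB : A * B = 1 := mul_eq_one_comm.mpr hBA
  set g : GL (Fin n) ℂ := ⟨A, B, hAB, hBA⟩ with hg
  -- order of W divides n
  have hWn : W ^ n = 1 := by
    apply Units.ext
    rw [Units.val_pow_eq_pow_val, hW, cycleMat_pow_n, Units.val_one]
  have hred : ∀ t : ℤ, W ^ t = W ^ ((t % (n : ℤ)).toNat) := by
    intro t
    have h1 : W ^ t = W ^ ((n : ℤ) * (t / (n : ℤ)) + t % (n : ℤ)) := by
      rw [Int.mul_ediv_add_emod]
    rw [h1, zpow_add, zpow_mul, zpow_natCast, hWn, one_zpow, one_mul,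
      ← zpow_natCast W ((t % (n : ℤ)).toNat), Int.toNat_of_nonneg (Int.emod_nonneg t hn0)]
  -- key matrix relation 1 : A * cycleMat^m = diagZeta * A
  have hrel1 : A * (cycleMat n) ^ m = diagZeta n ζ * A := by
    ext i j
    rw [cycleMat_pow, Matrix.mul_apply]
    simp only [hA, Matrix.of_apply]
    simp only [mul_ite, mul_one, mul_zero]
    rw [Finset.sum_ite_eq' Finset.univ (j + (m : Fin n))
      (fun t => ζ ^ (a * (i : ℕ) * (t : ℕ))), if_pos (Finset.mem_univ _)]
    rw [diagZeta, Matrix.diagonal_mul, Matrix.of_apply]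
    rw [show ζ ^ ((i : ℕ)) = ζ ^ (((i : ℕ) : ℤ)) from (zpow_natCast ζ _).symm,
      ← zpow_add₀ hne]
    apply zpow_congr_mod hζ
    have h1 : ((((j + (m : Fin n)) : Fin n) : ℕ) : ℤ) ≡ ((j : ℕ) : ℤ) + (m : ℤ)
        [ZMOD (n : ℤ)] := fin_add_cast_modeq n j m
    have h2 := h1.mul_left (a * ((i : ℕ) : ℤ))
    refine h2.trans ?_
    obtain ⟨t, ht⟩ := ham.dvd
    exact (Int.modEq_iff_dvd.mpr ⟨-(((i : ℕ) : ℤ) * t), by linear_combination -((i : ℕ) : ℤ) * ht⟩).symm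
  -- key matrix relation 2 : A * diagZeta = cycleMat^m' * A
  have hrel2 : A * diagZeta n ζ = (cycleMat n) ^ m' * A := by
    ext i j
    rw [diagZeta, Matrix.mul_diagonal, cycleMat_pow, Matrix.mul_apply]
    simp only [hA, Matrix.of_apply, ite_mul, one_mul, zero_mul]
    have hcond : ∀ t : Fin n, (i = t + (m' : Fin n)) ↔ (t = i - (m' : Fin n)) := by
      intro t
      rw [eq_sub_iff_add_eq, eq_comm]
    simp only [hcond]
    rw [Finset.sum_ite_eq' Finset.univ (i - (m' : Fin n))
      (fun t => ζ ^ (a * (t : ℕ) * (j : ℕ))), if_pos (Finset.mem_univ _)]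
    rw [show ζ ^ ((j : ℕ)) = ζ ^ (((j : ℕ) : ℤ)) from (zpow_natCast ζ _).symm,
      ← zpow_add₀ hne]
    symm
    apply zpow_congr_mod hζ
    have h1 : ((((i - (m' : Fin n)) : Fin n) : ℕ) : ℤ) ≡ ((i : ℕ) : ℤ) - (m' : ℤ)
        [ZMOD (n : ℤ)] := fin_sub_cast_modeq n i m'
    have h2 := (h1.mul_left a).mul_right (((j : ℕ) : ℤ))
    refine h2.trans ?_
    obtain ⟨t, ht⟩ := ham'.dvd
    exact (Int.modEq_iff_dvd.mpr
      ⟨(((j : ℕ) : ℤ)) * t, by linear_combination ((j : ℕ) : ℤ) * ht⟩).symm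
  -- lift relations to GL
  have hu1 : g * W ^ m = S * g := by
    apply Units.ext
    rw [Units.val_mul, Units.val_mul, Units.val_pow_eq_pow_val, hW, hS]
    exact hrel1
  have hu2 : g * S = W ^ m' * g := by
    apply Units.ext
    rw [Units.val_mul, Units.val_mul, Units.val_pow_eq_pow_val, hW, hS]
    exact hrel2
  refine ⟨g, 1, 1, ?_, ?_⟩
  · have : g * W ^ k * g⁻¹ = S := by
      rw [hred k, ← hm, hu1, mul_inv_cancel_right]
    rw [this, Units.val_one, one_smul]
  · have : g * S * g⁻¹ = W ^ (-k) := by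
      rw [hred (-k), ← hm', hu2, mul_inv_cancel_right]
    rw [this, Units.val_one, one_smul]
end

section
/- Let n ≥ 1, let ζ ∈ ℂ be a primitive n-th root of unity, s_n = diag(1, ζ, …, ζ^{n-1}), and let w_n be the n-cycle permutation matrix. Then g ∈ GL_n(ℂ) satisfies g·s_n·g^{-1} = λ·s_n for some λ ∈ ℂ^× if and only if g = d·w_n^k for some invertible diagonal matrix d and some integer k. In particular, the centralizer of s̄_n in PGL_n(ℂ) is generated by the image of the diagonal torus together with w̄_n, and is isomorphic to T ⋊ ℤ/nℤ where T is the image of the diagonal torus. -/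
/-- The image of the diagonal torus of `GL_n(ℂ)` in `PGL_n(ℂ)` (as a subgroup: it is the
closure of the set of images of invertible diagonal matrices, which is already a subgroup). -/
def diagTorusPGL (n : ℕ) : Subgroup (PGLn n) :=
  Subgroup.closure {x : PGLn n | ∃ d : GL (Fin n) ℂ,
    ((d : Matrix (Fin n) (Fin n) ℂ)).IsDiag ∧ QuotientGroup.mk d = x}

namespace Stmt6Aux
open Matrix
open Fin.NatCast

variable {n : ℕ} [NeZero n]

lemma pow_mod_of_pow_eq_one {G : Type*} [Monoid G] {y : G} (hy : y ^ n = 1) (a : ℕ) :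
    y ^ (a % n) = y ^ a := by
  conv_rhs => rw [← Nat.div_add_mod a n]
  rw [pow_add, pow_mul, hy, one_pow, one_mul]

lemma cycleMat_pow (m : ℕ) :
    (cycleMat n) ^ m = Matrix.of fun i j : Fin n => if i = j + (m : Fin n) then 1 else 0 := by
  induction m with
  | zero => ext i j; simp [Matrix.one_apply]
  | succ m ih =>
    ext i j
    rw [pow_succ, ih, Matrix.mul_apply]
    simp only [cycleMat, of_apply, mul_ite, mul_one, mul_zero, ite_mul, one_mul, zero_mul]
    rw [Finset.sum_ite_eq' Finset.univ (j+1) (fun l => if i = l + (m:Fin n) then (1:ℂ) else 0)]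
    have : ((m+1 : ℕ) : Fin n) = (m : Fin n) + 1 := by push_cast; ring
    simp [this, add_comm, add_assoc, add_left_comm]

lemma cycleMat_pow_n : (cycleMat n) ^ n = 1 := by
  rw [cycleMat_pow]
  ext i j
  simp [Matrix.one_apply, eq_comm]

lemma mul_cycleMat_pow (A : Matrix (Fin n) (Fin n) ℂ) (m : ℕ) (i j : Fin n) :
    (A * cycleMat n ^ m) i j = A i (j + (m : Fin n)) := by
  rw [Matrix.mul_apply]
  simp only [cycleMat_pow, of_apply, mul_ite, mul_one, mul_zero]
  simp

end Stmt6Aux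

namespace Stmt6Aux
open Matrix
open Fin.NatCast
set_option linter.unusedSectionVars false

variable {n : ℕ} [NeZero n] {ζ : ℂ} {S W : GL (Fin n) ℂ}

local notation "M" => Matrix (Fin n) (Fin n) ℂ

lemma diag_mul_comm {A : Matrix (Fin n) (Fin n) ℂ} (hA : A.IsDiag) (f : Fin n → ℂ) :
    A * Matrix.diagonal f = Matrix.diagonal f * A := by
  ext i j
  rw [Matrix.mul_diagonal, Matrix.diagonal_mul]
  rcases eq_or_ne i j with rfl | h
  · ring
  · rw [hA h]; ring

lemma diag_mul_comm' {A : Matrix (Fin n) (Fin n) ℂ} (hA : A.IsDiag) :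
    A * diagZeta n ζ = diagZeta n ζ * A := diag_mul_comm hA _

lemma units_right_cancel {X Y : Matrix (Fin n) (Fin n) ℂ} (g : GL (Fin n) ℂ)
    (h : X * (g : M) = Y * (g : M)) : X = Y := by
  calc X = X * ((g : M) * ((g⁻¹ : GL (Fin n) ℂ) : M)) := by
        rw [← Units.val_mul, mul_inv_cancel, Units.val_one, mul_one]
  _ = Y * ((g : M) * ((g⁻¹ : GL (Fin n) ℂ) : M)) := by rw [← mul_assoc, h, mul_assoc]
  _ = Y := by rw [← Units.val_mul, mul_inv_cancel, Units.val_one, mul_one]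

lemma exists_ne_zero_entry (g : GL (Fin n) ℂ) : ∃ i j : Fin n, (g : M) i j ≠ 0 := by
  have i : Fin n := ⟨0, Nat.pos_of_ne_zero (NeZero.ne n)⟩
  by_contra h
  push_neg at h
  have h1 : (g : M) * ((g⁻¹ : GL (Fin n) ℂ) : M) = 1 := by
    rw [← Units.val_mul, mul_inv_cancel, Units.val_one]
  have := congrFun (congrFun h1 i) i
  simp [Matrix.mul_apply, h] at this

lemma cycle_diag_comm (hζ : IsPrimitiveRoot ζ n) (m : ℕ) :
    cycleMat n ^ m * diagZeta n ζ = (ζ ^ m)⁻¹ • (diagZeta n ζ * cycleMat n ^ m) := by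
  have hz1 : ζ ^ n = 1 := hζ.pow_eq_one
  have hzm : ∀ a : ℕ, ζ ^ (a % n) = ζ ^ a := pow_mod_of_pow_eq_one hz1
  have hzne : ζ ≠ 0 := hζ.ne_zero (NeZero.ne n)
  ext i j
  rw [diagZeta, Matrix.mul_diagonal, Matrix.smul_apply, Matrix.diagonal_mul, cycleMat_pow]
  simp only [Matrix.of_apply]
  rcases eq_or_ne i (j + (m : Fin n)) with rfl | h
  · simp only [if_pos rfl]
    have hval : (((j + (m : Fin n)) : Fin n) : ℕ) = ((j : ℕ) + m % n) % n := by
      rw [Fin.add_def, Fin.val_natCast]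
    have hpow : ζ ^ (((j + (m : Fin n)) : Fin n) : ℕ) = ζ ^ (j : ℕ) * ζ ^ m := by
      rw [hval, hzm, pow_add, hzm]
    rw [hpow]
    simp only [↓reduceIte, smul_eq_mul]
    field_simp
  · simp [h]

lemma part1_forward (hζ : IsPrimitiveRoot ζ n)
    (hS : (S : M) = diagZeta n ζ) (hW : (W : M) = cycleMat n)
    {g : GL (Fin n) ℂ} {lam : ℂ} (hne : lam ≠ 0)
    (hEq : ((g * S * g⁻¹ : GL (Fin n) ℂ) : M) = lam • (S : M)) :
    ∃ (dmat : GL (Fin n) ℂ) (m : ℕ), ((dmat : M)).IsDiag ∧ g = dmat * W ^ m := by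
  have hz1 : ζ ^ n = 1 := hζ.pow_eq_one
  have hzm : ∀ a : ℕ, ζ ^ (a % n) = ζ ^ a := pow_mod_of_pow_eq_one hz1
  have npos : 0 < n := Nat.pos_of_ne_zero (NeZero.ne n)
  have hgs : (g : M) * (S : M) = lam • ((S : M) * (g : M)) := by
    have h1 : ((g * S * g⁻¹ : GL (Fin n) ℂ) : M) * (g : M) = (g : M) * (S : M) := by
      rw [← Units.val_mul, mul_assoc, inv_mul_cancel, mul_one, Units.val_mul]
    rw [← h1, hEq, smul_mul_assoc]
  have hsupp : ∀ i j : Fin n, (g : M) i j ≠ 0 → ζ ^ (j : ℕ) = lam * ζ ^ (i : ℕ) := by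
    intro i j hgij
    have h1 := congrFun (congrFun hgs i) j
    rw [hS, diagZeta, Matrix.mul_diagonal, Matrix.smul_apply, Matrix.diagonal_mul] at h1
    rw [smul_eq_mul] at h1
    have h2 : ζ ^ (j : ℕ) * (g : M) i j = (lam * ζ ^ (i : ℕ)) * (g : M) i j := by
      linear_combination h1
    exact mul_right_cancel₀ hgij h2
  obtain ⟨i0, j0, h0⟩ := exists_ne_zero_entry g
  set K : ℕ := (j0 : ℕ) + (n - (i0 : ℕ)) with hK
  have hzi : ζ ^ ((i0 : ℕ)) * ζ ^ (n - (i0 : ℕ)) = 1 := by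
    rw [← pow_add, Nat.add_sub_cancel' (le_of_lt i0.isLt), hz1]
  have hlam : lam = ζ ^ K := by
    have h1 := hsupp i0 j0 h0
    rw [hK, pow_add]
    calc lam = lam * (ζ ^ ((i0 : ℕ)) * ζ ^ (n - (i0 : ℕ))) := by rw [hzi, mul_one]
    _ = (lam * ζ ^ ((i0 : ℕ))) * ζ ^ (n - (i0 : ℕ)) := by ring
    _ = ζ ^ ((j0 : ℕ)) * ζ ^ (n - (i0 : ℕ)) := by rw [← h1]
  have hsupp2 : ∀ i j : Fin n, (g : M) i j ≠ 0 → j = i + (K : Fin n) := by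
    intro i j hgij
    have h1 := hsupp i j hgij
    rw [hlam, ← pow_add] at h1
    have h2 : (j : ℕ) = (K + (i : ℕ)) % n := by
      apply hζ.pow_inj j.isLt (Nat.mod_lt _ npos)
      rw [hzm, ← h1]
    apply Fin.ext
    rw [Fin.add_def, Fin.val_natCast, h2]
    show (K + (i : ℕ)) % n = ((i : ℕ) + K % n) % n
    rw [Nat.add_mod_mod, Nat.add_comm]
  set m : ℕ := n - K % n with hm
  have hKm : (K : Fin n) + (m : Fin n) = 0 := by
    apply Fin.ext
    rw [Fin.add_def, Fin.val_natCast, Fin.val_natCast]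
    show (K % n + m % n) % n = (0 : Fin n).val
    rcases Nat.eq_zero_or_pos (K % n) with h | h
    · have hmn : m = n := by omega
      simp [h, hmn, Nat.mod_self]
    · have hlt : K % n < n := Nat.mod_lt _ npos
      have h1 : m < n := by omega
      have h2 : K % n + m % n = n := by rw [Nat.mod_eq_of_lt h1]; omega
      simp [h2, Nat.mod_self]
  refine ⟨g * (W ^ m)⁻¹, m, ?_, by group⟩
  have hWm : ((W ^ m : GL (Fin n) ℂ) : M) = cycleMat n ^ m := by
    rw [Units.val_pow_eq_pow_val, hW]
  have hdg : ((g * (W ^ m)⁻¹ : GL (Fin n) ℂ) : M) * cycleMat n ^ m = (g : M) := by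
    rw [← hWm, ← Units.val_mul, inv_mul_cancel_right]
  intro i l hil
  by_contra hne0
  have h2 : (g : M) i (l - (m : Fin n)) = ((g * (W ^ m)⁻¹ : GL (Fin n) ℂ) : M) i l := by
    rw [← hdg, mul_cycleMat_pow, sub_add_cancel]
  have h3 : (g : M) i (l - (m : Fin n)) ≠ 0 := by rw [h2]; exact hne0
  have h4 := hsupp2 _ _ h3
  apply hil
  have h5 : l = i + (K : Fin n) + (m : Fin n) := by
    rw [← h4, sub_add_cancel]
  rw [h5, add_assoc, hKm, add_zero]

lemma part1_backward (hζ : IsPrimitiveRoot ζ n)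
    (hS : (S : M) = diagZeta n ζ) (hW : (W : M) = cycleMat n)
    (dmat : GL (Fin n) ℂ) (k : ℤ) (hd : ((dmat : M)).IsDiag) :
    ∃ lam : ℂ, lam ≠ 0 ∧
      ((dmat * W ^ k * S * (dmat * W ^ k)⁻¹ : GL (Fin n) ℂ) : M) = lam • (S : M) := by
  have hzne : ζ ≠ 0 := hζ.ne_zero (NeZero.ne n)
  have hWn : W ^ n = 1 := by
    apply Units.ext
    rw [Units.val_pow_eq_pow_val, hW, cycleMat_pow_n, Units.val_one]
  set m : ℕ := (k % (n : ℤ)).toNat with hm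
  have hnn : (0 : ℤ) ≤ k % (n : ℤ) := Int.emod_nonneg k (by exact_mod_cast NeZero.ne n)
  have hWk : W ^ k = W ^ m := by
    calc W ^ k = W ^ ((n : ℤ) * (k / (n : ℤ)) + k % (n : ℤ)) := by
          rw [Int.mul_ediv_add_emod k (n : ℤ)]
    _ = (W ^ (n : ℤ)) ^ (k / (n : ℤ)) * W ^ (k % (n : ℤ)) := by rw [_root_.zpow_add, _root_.zpow_mul]
    _ = W ^ (k % (n : ℤ)) := by rw [_root_.zpow_natCast, hWn, _root_.one_zpow, one_mul]
    _ = W ^ ((m : ℕ) : ℤ) := by rw [hm, Int.toNat_of_nonneg hnn]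
    _ = W ^ m := zpow_natCast W m
  refine ⟨(ζ ^ m)⁻¹, inv_ne_zero (pow_ne_zero _ hzne), ?_⟩
  apply units_right_cancel (dmat * W ^ k)
  have hL : ((dmat * W ^ k * S * (dmat * W ^ k)⁻¹ : GL (Fin n) ℂ) : M) * ((dmat * W ^ k : GL (Fin n) ℂ) : M)
      = ((dmat * W ^ k * S : GL (Fin n) ℂ) : M) := by
    rw [← Units.val_mul, inv_mul_cancel_right]
  rw [hL, hWk, Units.val_mul, Units.val_mul, Units.val_pow_eq_pow_val, hW, hS,
    mul_assoc, cycle_diag_comm hζ m, mul_smul_comm, smul_mul_assoc]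
  congr 1
  rw [← mul_assoc, ← mul_assoc, diag_mul_comm' hd]


def scalarUnit (n : ℕ) [NeZero n] (c : ℂˣ) : GL (Fin n) ℂ :=
  ⟨Matrix.scalar (Fin n) (c : ℂ), Matrix.scalar (Fin n) ((c⁻¹ : ℂˣ) : ℂ),
    by rw [← _root_.map_mul, Units.mul_inv, _root_.map_one], by rw [← _root_.map_mul, Units.inv_mul, _root_.map_one]⟩

lemma scalarUnit_mem_center (c : ℂˣ) :
    scalarUnit n c ∈ Subgroup.center (GL (Fin n) ℂ) := by
  rw [Subgroup.mem_center_iff]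
  intro g
  apply Units.ext
  rw [Units.val_mul, Units.val_mul]
  exact ((Matrix.scalar_commute (c : ℂ) (fun r => Commute.all _ r) (g : M)).eq).symm

lemma center_is_scalar {z : GL (Fin n) ℂ} (hz : z ∈ Subgroup.center (GL (Fin n) ℂ)) :
    ∃ c : ℂ, c ≠ 0 ∧ (z : M) = Matrix.scalar (Fin n) c := by
  have npos : 0 < n := Nat.pos_of_ne_zero (NeZero.ne n)
  have hcomm : Pairwise fun i j : Fin n => Commute (Matrix.single i j 1) (z : M) := by
    intro i j hij
    set E := Matrix.single i j (1 : ℂ) with hE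
    have hEE : E * E = 0 := Matrix.single_mul_single_of_ne (h := Ne.symm hij) ..
    have h1 : ((1 : M) + E) * ((1 : M) - E) = 1 := by
      rw [mul_sub, mul_one, add_mul, one_mul, hEE, add_zero, add_sub_cancel_right]
    have h2 : ((1 : M) - E) * ((1 : M) + E) = 1 := by
      rw [sub_mul, one_mul, mul_add, mul_one, hEE, add_zero, add_sub_cancel_right]
    have hu := Subgroup.mem_center_iff.mp hz ⟨(1 : M) + E, (1 : M) - E, h1, h2⟩
    have hval := congrArg Units.val hu
    rw [Units.val_mul, Units.val_mul] at hval
    show E * (z : M) = (z : M) * E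
    have hval2 : (z : M) + E * (z : M) = (z : M) + (z : M) * E := by
      rw [← one_mul (z : M)]
      calc (1 : M) * (z:M) + E * ((1:M) * (z:M)) = ((1 : M) + E) * (z : M) := by
            rw [one_mul, add_mul, one_mul]
      _ = (z : M) * ((1 : M) + E) := hval
      _ = (z:M) * (1:M) + (z:M) * E := by rw [mul_add, mul_one]
      _ = (1:M) * (z:M) + ((1:M) * (z:M)) * E := by rw [one_mul, mul_one]
    exact add_left_cancel hval2
  obtain ⟨c, hc⟩ := Matrix.mem_range_scalar_of_commute_single hcomm
  refine ⟨c, ?_, hc.symm⟩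
  have hinv : (z : M) * ((z⁻¹ : GL (Fin n) ℂ) : M) = 1 := by
    rw [← Units.val_mul, mul_inv_cancel, Units.val_one]
  have i0 : Fin n := ⟨0, npos⟩
  have h1 := congrFun (congrFun hinv i0) i0
  rw [← hc, Matrix.scalar_apply, Matrix.diagonal_mul, Matrix.one_apply_eq] at h1
  exact left_ne_zero_of_mul_eq_one h1


lemma centralizer_iff (g : GL (Fin n) ℂ) :
    (QuotientGroup.mk g : PGLn n) ∈ Subgroup.centralizer {(QuotientGroup.mk S : PGLn n)} ↔
    ∃ lam : ℂ, lam ≠ 0 ∧ ((g * S * g⁻¹ : GL (Fin n) ℂ) : M) = lam • (S : M) := by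
  rw [Subgroup.mem_centralizer_singleton_iff]
  constructor
  · intro h
    rw [← QuotientGroup.mk_mul, ← QuotientGroup.mk_mul, QuotientGroup.eq] at h
    set z : GL (Fin n) ℂ := (g * S)⁻¹ * (S * g) with hzdef
    have hzc : z ∈ Subgroup.center (GL (Fin n) ℂ) := h
    have hzinv : z⁻¹ ∈ Subgroup.center (GL (Fin n) ℂ) := inv_mem hzc
    have hcom : ∀ a : GL (Fin n) ℂ, a * z⁻¹ = z⁻¹ * a :=
      fun a => Subgroup.mem_center_iff.mp hzinv a
    have h1 : S * g = g * S * z := by rw [hzdef]; group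
    have h2 : g * S = S * g * z⁻¹ := by rw [h1, mul_inv_cancel_right]
    have key : g * S * g⁻¹ = S * z⁻¹ := by
      rw [h2, mul_assoc (S * g), ← hcom g⁻¹, ← mul_assoc, mul_inv_cancel_right]
    obtain ⟨c, hc0, hcs⟩ := center_is_scalar hzinv
    refine ⟨c, hc0, ?_⟩
    rw [key, Units.val_mul, hcs, Matrix.scalar_apply]
    ext i j
    simp [Matrix.mul_diagonal, mul_comm]
  · rintro ⟨lam, h0, hEq⟩
    set c : ℂˣ := Units.mk0 lam h0 with hc
    have hval : ((g * S * g⁻¹ : GL (Fin n) ℂ) : M) = ((S * scalarUnit n c : GL (Fin n) ℂ) : M) := by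
      rw [hEq, Units.val_mul]
      show lam • (S : M) = (S : M) * Matrix.scalar (Fin n) lam
      rw [Matrix.scalar_apply]
      ext i j
      simp [Matrix.mul_diagonal, mul_comm]
    have hu : g * S * g⁻¹ = S * scalarUnit n c := Units.ext hval
    have hq : (QuotientGroup.mk (g * S * g⁻¹) : PGLn n) = QuotientGroup.mk S := by
      rw [hu, QuotientGroup.mk_mul, (QuotientGroup.eq_one_iff _).mpr (scalarUnit_mem_center c),
        mul_one]
    rw [QuotientGroup.mk_mul, QuotientGroup.mk_mul, QuotientGroup.mk_inv] at hq
    exact mul_inv_eq_iff_eq_mul.mp hq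

lemma part2 (hζ : IsPrimitiveRoot ζ n)
    (hS : (S : M) = diagZeta n ζ) (hW : (W : M) = cycleMat n) :
    Subgroup.centralizer {(QuotientGroup.mk S : PGLn n)} =
      Subgroup.closure ({x : PGLn n | ∃ d : GL (Fin n) ℂ,
          ((d : Matrix (Fin n) (Fin n) ℂ)).IsDiag ∧ QuotientGroup.mk d = x}
        ∪ {(QuotientGroup.mk W : PGLn n)}) := by
  apply le_antisymm
  · intro x hx
    obtain ⟨g, rfl⟩ := QuotientGroup.mk_surjective x
    obtain ⟨lam, h0, hEq⟩ := (centralizer_iff g).mp hx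
    obtain ⟨dmat, m, hdiag, rfl⟩ := part1_forward hζ hS hW h0 hEq
    rw [QuotientGroup.mk_mul, QuotientGroup.mk_pow]
    refine Subgroup.mul_mem _ (Subgroup.subset_closure ?_) (Subgroup.pow_mem _ (Subgroup.subset_closure ?_) m)
    · exact Set.mem_union_left _ ⟨dmat, hdiag, rfl⟩
    · exact Set.mem_union_right _ rfl
  · rw [Subgroup.closure_le]
    rintro x (⟨d, hdiag, rfl⟩ | rfl)
    · apply (centralizer_iff d).mpr
      refine ⟨1, one_ne_zero, ?_⟩
      have hds : d * S = S * d := by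
        apply Units.ext
        rw [Units.val_mul, Units.val_mul, hS]
        exact diag_mul_comm' hdiag
      rw [hds, mul_inv_cancel_right, one_smul]
    · apply (centralizer_iff W).mpr
      obtain ⟨lam, h0, hEq⟩ := part1_backward hζ hS hW 1 1 (by
        rw [Units.val_one]; exact Matrix.isDiag_one)
      simp only [zpow_one, one_mul] at hEq
      exact ⟨lam, h0, hEq⟩


lemma isDiag_mul {A B : Matrix (Fin n) (Fin n) ℂ} (hA : A.IsDiag) (hB : B.IsDiag) :
    (A * B).IsDiag := by
  rw [← hA.diagonal_diag, ← hB.diagonal_diag, Matrix.diagonal_mul_diagonal]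
  exact Matrix.isDiag_diagonal _

lemma isDiag_inv {d : GL (Fin n) ℂ} (hd : ((d : M)).IsDiag) :
    (((d⁻¹ : GL (Fin n) ℂ) : M)).IsDiag := by
  rw [Matrix.coe_units_inv, ← hd.diagonal_diag, Matrix.inv_diagonal]
  exact Matrix.isDiag_diagonal _

/-- The set of images of invertible diagonal matrices, as a subgroup. -/
def Tsub (n : ℕ) [NeZero n] : Subgroup (PGLn n) where
  carrier := {x : PGLn n | ∃ d : GL (Fin n) ℂ,
    ((d : Matrix (Fin n) (Fin n) ℂ)).IsDiag ∧ QuotientGroup.mk d = x}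
  one_mem' := ⟨1, by rw [Units.val_one]; exact Matrix.isDiag_one, rfl⟩
  mul_mem' := by
    rintro a b ⟨d1, h1, rfl⟩ ⟨d2, h2, rfl⟩
    exact ⟨d1 * d2, by rw [Units.val_mul]; exact isDiag_mul h1 h2, by rw [QuotientGroup.mk_mul]⟩
  inv_mem' := by
    rintro a ⟨d, h, rfl⟩
    exact ⟨d⁻¹, isDiag_inv h, by rw [QuotientGroup.mk_inv]⟩

lemma diagTorus_eq : diagTorusPGL n = Tsub n := by
  apply Subgroup.closure_eq (Tsub n)

lemma mem_diagTorus {x : PGLn n} :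
    x ∈ diagTorusPGL n ↔ ∃ d : GL (Fin n) ℂ,
      ((d : Matrix (Fin n) (Fin n) ℂ)).IsDiag ∧ QuotientGroup.mk d = x := by
  rw [diagTorus_eq]; exact Iff.rfl

lemma cycleMat_pow_mul (A : Matrix (Fin n) (Fin n) ℂ) (m : ℕ) (i j : Fin n) :
    (cycleMat n ^ m * A) i j = A (i - (m : Fin n)) j := by
  rw [Matrix.mul_apply]
  simp only [cycleMat_pow, Matrix.of_apply, ite_mul, one_mul, zero_mul]
  rw [Finset.sum_congr rfl (fun l _ => ?_), Finset.sum_ite_eq Finset.univ (i - (m : Fin n)) (fun l => A l j)]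
  · simp
  · congr 1
    simp only [eq_iff_iff]
    constructor
    · intro h; rw [h]; rw [add_sub_cancel_right]
    · intro h; rw [← h]; rw [sub_add_cancel]


lemma conj_diag (hW : (W : M) = cycleMat n) (m : ℕ) {d : GL (Fin n) ℂ}
    (hd : ((d : M)).IsDiag) :
    (((W ^ m * d * (W ^ m)⁻¹ : GL (Fin n) ℂ) : M)).IsDiag := by
  set X := (W ^ m * d * (W ^ m)⁻¹ : GL (Fin n) ℂ) with hX
  have hWm : ((W ^ m : GL (Fin n) ℂ) : M) = cycleMat n ^ m := by
    rw [Units.val_pow_eq_pow_val, hW]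
  have hXW : (X : M) * cycleMat n ^ m = cycleMat n ^ m * (d : M) := by
    rw [← hWm, ← Units.val_mul, ← Units.val_mul, hX, inv_mul_cancel_right]
  have hent : ∀ i l : Fin n, (X : M) i l = (d : M) (i - (m : Fin n)) (l - (m : Fin n)) := by
    intro i l
    have h1 := congrFun (congrFun hXW i) (l - (m : Fin n))
    rw [mul_cycleMat_pow, sub_add_cancel, cycleMat_pow_mul] at h1
    exact h1
  intro i l hil
  rw [hent]
  exact hd (fun h => hil (by
    have := congrArg (fun t => t + (m : Fin n)) h
    simpa [sub_add_cancel] using this))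

lemma conj_diag' (hW : (W : M) = cycleMat n) (m : ℕ) {d : GL (Fin n) ℂ}
    (hd : ((d : M)).IsDiag) :
    ((((W ^ m)⁻¹ * d * W ^ m : GL (Fin n) ℂ) : M)).IsDiag := by
  set X := ((W ^ m)⁻¹ * d * W ^ m : GL (Fin n) ℂ) with hX
  have hWm : ((W ^ m : GL (Fin n) ℂ) : M) = cycleMat n ^ m := by
    rw [Units.val_pow_eq_pow_val, hW]
  have hWX : cycleMat n ^ m * (X : M) = (d : M) * cycleMat n ^ m := by
    rw [← hWm, ← Units.val_mul, ← Units.val_mul, hX, ← mul_assoc, ← mul_assoc,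
      mul_inv_cancel, one_mul]
  have hent : ∀ i l : Fin n, (X : M) i l = (d : M) (i + (m : Fin n)) (l + (m : Fin n)) := by
    intro i l
    have h1 := congrFun (congrFun hWX (i + (m : Fin n))) l
    rw [cycleMat_pow_mul, add_sub_cancel_right, mul_cycleMat_pow] at h1
    exact h1
  intro i l hil
  rw [hent]
  exact hd (fun h => hil (by
    have := congrArg (fun t => t - (m : Fin n)) h
    simpa [add_sub_cancel_right] using this))


section General
variable {G : Type*} [Group G]

/-- The hom `ZMod n →* G` sending `k` to `y ^ k.val`, for `y` with `y ^ n = 1`. -/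
def powZMod (n : ℕ) [NeZero n] (y : G) (hy : y ^ n = 1) : Multiplicative (ZMod n) →* G where
  toFun k := y ^ (Multiplicative.toAdd k).val
  map_one' := by
    show y ^ (ZMod.val (0 : ZMod n)) = 1
    rw [ZMod.val_zero, pow_zero]
  map_mul' a b := by
    show y ^ (ZMod.val (Multiplicative.toAdd a + Multiplicative.toAdd b)) = _
    rw [ZMod.val_add, pow_mod_of_pow_eq_one hy, pow_add]

/-- Conjugation by powers of `y` as automorphisms of an invariant subgroup `T`. -/
def conjZMod (n : ℕ) [NeZero n] (T : Subgroup G) (y : G) (hy : y ^ n = 1)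
    (h1 : ∀ m : ℕ, ∀ x ∈ T, y ^ m * x * (y ^ m)⁻¹ ∈ T)
    (h2 : ∀ m : ℕ, ∀ x ∈ T, (y ^ m)⁻¹ * x * y ^ m ∈ T) :
    Multiplicative (ZMod n) →* MulAut T where
  toFun k :=
    { toFun := fun t => ⟨y ^ (Multiplicative.toAdd k).val * t * (y ^ (Multiplicative.toAdd k).val)⁻¹,
        h1 _ _ t.2⟩
      invFun := fun t => ⟨(y ^ (Multiplicative.toAdd k).val)⁻¹ * t * y ^ (Multiplicative.toAdd k).val,
        h2 _ _ t.2⟩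
      left_inv := fun t => by ext; show _ = (t : G); group
      right_inv := fun t => by ext; show _ = (t : G); group
      map_mul' := fun a b => by ext; show _ = _; push_cast; group }
  map_one' := by
    ext t
    have h0 : (Multiplicative.toAdd (1 : Multiplicative (ZMod n))).val = 0 := by
      rw [toAdd_one, ZMod.val_zero]
    show y ^ (Multiplicative.toAdd (1 : Multiplicative (ZMod n))).val * (t : G) *
        (y ^ (Multiplicative.toAdd (1 : Multiplicative (ZMod n))).val)⁻¹ = (t : G)
    rw [h0, pow_zero]; group
  map_mul' a b := by
    have hab : y ^ (Multiplicative.toAdd (a * b)).val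
        = y ^ (Multiplicative.toAdd a).val * y ^ (Multiplicative.toAdd b).val := by
      show y ^ (ZMod.val (Multiplicative.toAdd a + Multiplicative.toAdd b)) = _
      rw [ZMod.val_add, pow_mod_of_pow_eq_one hy, pow_add]
    ext t
    show y ^ (Multiplicative.toAdd (a * b)).val * (t : G) *
        (y ^ (Multiplicative.toAdd (a * b)).val)⁻¹
      = y ^ (Multiplicative.toAdd a).val * (y ^ (Multiplicative.toAdd b).val * (t : G) *
          (y ^ (Multiplicative.toAdd b).val)⁻¹) * (y ^ (Multiplicative.toAdd a).val)⁻¹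
    rw [hab]; group

lemma conjZMod_compat (n : ℕ) [NeZero n] (T : Subgroup G) (y : G) (hy : y ^ n = 1)
    (h1 : ∀ m : ℕ, ∀ x ∈ T, y ^ m * x * (y ^ m)⁻¹ ∈ T)
    (h2 : ∀ m : ℕ, ∀ x ∈ T, (y ^ m)⁻¹ * x * y ^ m ∈ T) (k : Multiplicative (ZMod n)) :
    T.subtype.comp ((conjZMod n T y hy h1 h2) k).toMonoidHom =
      (MulAut.conj ((powZMod n y hy) k)).toMonoidHom.comp T.subtype := by
  ext t
  rfl

end General


lemma part3 (hζ : IsPrimitiveRoot ζ n)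
    (hS : (S : M) = diagZeta n ζ) (hW : (W : M) = cycleMat n) :
    ∃ φ : Multiplicative (ZMod n) →* MulAut ↥(diagTorusPGL n),
      Nonempty (↥(Subgroup.centralizer {(QuotientGroup.mk S : PGLn n)}) ≃*
        (↥(diagTorusPGL n) ⋊[φ] Multiplicative (ZMod n))) := by
  have npos : 0 < n := Nat.pos_of_ne_zero (NeZero.ne n)
  set y : PGLn n := QuotientGroup.mk W with hy
  have hWn : W ^ n = 1 :=
    Units.ext (by rw [Units.val_pow_eq_pow_val, hW, cycleMat_pow_n, Units.val_one])
  have hyn : y ^ n = 1 := by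
    rw [hy, ← QuotientGroup.mk_pow, hWn, QuotientGroup.mk_one]
  have h1 : ∀ m : ℕ, ∀ x ∈ diagTorusPGL n, y ^ m * x * (y ^ m)⁻¹ ∈ diagTorusPGL n := by
    intro m x hx
    obtain ⟨d, hd, rfl⟩ := mem_diagTorus.mp hx
    rw [mem_diagTorus]
    refine ⟨W ^ m * d * (W ^ m)⁻¹, conj_diag hW m hd, ?_⟩
    rw [QuotientGroup.mk_mul, QuotientGroup.mk_mul, QuotientGroup.mk_inv, QuotientGroup.mk_pow]
  have h2 : ∀ m : ℕ, ∀ x ∈ diagTorusPGL n, (y ^ m)⁻¹ * x * y ^ m ∈ diagTorusPGL n := by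
    intro m x hx
    obtain ⟨d, hd, rfl⟩ := mem_diagTorus.mp hx
    rw [mem_diagTorus]
    refine ⟨(W ^ m)⁻¹ * d * W ^ m, conj_diag' hW m hd, ?_⟩
    rw [QuotientGroup.mk_mul, QuotientGroup.mk_mul, QuotientGroup.mk_inv, QuotientGroup.mk_pow]
  refine ⟨conjZMod n (diagTorusPGL n) y hyn h1 h2, ?_⟩
  set ω : Multiplicative (ZMod n) →* PGLn n := powZMod n y hyn with hω
  set Θ : (↥(diagTorusPGL n) ⋊[conjZMod n (diagTorusPGL n) y hyn h1 h2]
      Multiplicative (ZMod n)) →* PGLn n :=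
    SemidirectProduct.lift (diagTorusPGL n).subtype ω
      (conjZMod_compat n (diagTorusPGL n) y hyn h1 h2) with hΘ
  have hTC : diagTorusPGL n ≤ Subgroup.centralizer {(QuotientGroup.mk S : PGLn n)} := by
    intro x hx
    obtain ⟨d, hd, rfl⟩ := mem_diagTorus.mp hx
    apply (centralizer_iff d).mpr
    refine ⟨1, one_ne_zero, ?_⟩
    have hds : d * S = S * d := Units.ext
      (by rw [Units.val_mul, Units.val_mul, hS]; exact diag_mul_comm' hd)
    rw [hds, mul_inv_cancel_right, one_smul]
  have hyC : y ∈ Subgroup.centralizer {(QuotientGroup.mk S : PGLn n)} := by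
    apply (centralizer_iff W).mpr
    obtain ⟨lam, h0, hEq⟩ := part1_backward hζ hS hW 1 1 (by
      rw [Units.val_one]; exact Matrix.isDiag_one)
    simp only [zpow_one, one_mul] at hEq
    exact ⟨lam, h0, hEq⟩
  have hΘval : ∀ p, Θ p = ((p.left : PGLn n)) * ω p.right := by
    intro p
    conv_lhs => rw [← SemidirectProduct.inl_left_mul_inr_right p]
    rw [_root_.map_mul, SemidirectProduct.lift_inl, SemidirectProduct.lift_inr]
    rfl
  have hmem : ∀ p, Θ p ∈ Subgroup.centralizer {(QuotientGroup.mk S : PGLn n)} := by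
    intro p
    rw [hΘval]
    exact Subgroup.mul_mem _ (hTC p.left.2) (Subgroup.pow_mem _ hyC _)
  set Θ' := Θ.codRestrict (Subgroup.centralizer {(QuotientGroup.mk S : PGLn n)}) hmem with hΘ'
  have hinj : Function.Injective Θ' := by
    apply (injective_iff_map_eq_one Θ').mpr
    intro p hp
    have hp' : ((p.left : PGLn n)) * ω p.right = 1 := by
      rw [← hΘval]
      exact Subtype.ext_iff.mp hp
    obtain ⟨d, hd, hmk⟩ := mem_diagTorus.mp p.left.2
    set v : ℕ := (Multiplicative.toAdd p.right).val with hv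
    have hωv : ω p.right = y ^ v := rfl
    rw [hωv, ← hmk] at hp'
    have hone : (QuotientGroup.mk (d * W ^ v) : PGLn n) = 1 := by
      rw [QuotientGroup.mk_mul, QuotientGroup.mk_pow]
      exact hp'
    obtain ⟨c, hc0, hcs⟩ := center_is_scalar ((QuotientGroup.eq_one_iff _).mp hone)
    have hvz : v = 0 := by
      by_contra hvne
      have hvlt : v < n := ZMod.val_lt _
      have hfne : ((v : Fin n)) ≠ 0 := by
        intro h
        apply hvne
        have h3 := congrArg Fin.val h
        rwa [Fin.val_natCast, Fin.val_zero, Nat.mod_eq_of_lt hvlt] at h3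
      have i0 : Fin n := ⟨0, npos⟩
      have hent := congrFun (congrFun hcs i0) i0
      rw [Units.val_mul, Units.val_pow_eq_pow_val, hW, mul_cycleMat_pow, Matrix.scalar_apply,
        Matrix.diagonal_apply_eq] at hent
      have hne : i0 ≠ i0 + ((v : ℕ) : Fin n) := by
        intro h
        exact hfne (left_eq_add.mp h)
      rw [hd hne] at hent
      exact hc0 hent.symm
    have hpr : p.right = 1 := by
      have h4 : (Multiplicative.toAdd p.right) = 0 := by
        rw [← ZMod.val_eq_zero, ← hv, hvz]
      exact toAdd_eq_zero.mp h4
    have hpl : p.left = 1 := by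
      apply Subtype.ext
      have h5 := hp'
      rw [hmk] at h5
      rw [hvz, pow_zero, mul_one] at h5
      exact h5
    exact SemidirectProduct.ext hpl hpr
  have hsurj : Function.Surjective Θ' := by
    rintro ⟨x, hx⟩
    obtain ⟨g, rfl⟩ := QuotientGroup.mk_surjective x
    obtain ⟨lam, h0, hEq⟩ := (centralizer_iff g).mp hx
    obtain ⟨dmat, m, hdiag, rfl⟩ := part1_forward hζ hS hW h0 hEq
    refine ⟨⟨⟨QuotientGroup.mk dmat, Subgroup.subset_closure ⟨dmat, hdiag, rfl⟩⟩,
      Multiplicative.ofAdd ((m : ℕ) : ZMod n)⟩, ?_⟩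
    apply Subtype.ext
    show Θ _ = _
    rw [hΘval]
    have hωm : ω (Multiplicative.ofAdd ((m : ℕ) : ZMod n)) = y ^ m := by
      show y ^ (ZMod.val ((m : ℕ) : ZMod n)) = y ^ m
      rw [ZMod.val_natCast, pow_mod_of_pow_eq_one hyn]
    show (QuotientGroup.mk dmat : PGLn n) * ω (Multiplicative.ofAdd ((m : ℕ) : ZMod n)) = _
    rw [hωm, hy, ← QuotientGroup.mk_pow, ← QuotientGroup.mk_mul]
  exact ⟨(MulEquiv.ofBijective Θ' ⟨hinj, hsurj⟩).symm⟩

end Stmt6Aux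

/-- Let `n ≥ 1`, `ζ` a primitive `n`-th root of unity,
`s_n = diag(1, ζ, …, ζ^{n-1})` and `w_n` the `n`-cycle permutation matrix.  Then
`g ∈ GL_n(ℂ)` satisfies `g s_n g⁻¹ = λ s_n` for some `λ ∈ ℂˣ` iff `g = d·w_n^k` for some
invertible diagonal matrix `d` and some integer `k`.  In particular, the centralizer of
`s̄_n` in `PGL_n(ℂ)` is generated by the image of the diagonal torus together with `w̄_n`,
and is isomorphic to `T ⋊ ℤ/nℤ` where `T` is the image of the diagonal torus. -/
theorem stmt6 (n : ℕ) [NeZero n] (ζ : ℂ) (hζ : IsPrimitiveRoot ζ n)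
    (S W : GL (Fin n) ℂ)
    (hS : (S : Matrix (Fin n) (Fin n) ℂ) = diagZeta n ζ)
    (hW : (W : Matrix (Fin n) (Fin n) ℂ) = cycleMat n) :
    (∀ g : GL (Fin n) ℂ,
      (∃ lam : ℂ, lam ≠ 0 ∧
          ((g * S * g⁻¹ : GL (Fin n) ℂ) : Matrix (Fin n) (Fin n) ℂ)
            = lam • (S : Matrix (Fin n) (Fin n) ℂ))
        ↔ ∃ (dmat : GL (Fin n) ℂ) (k : ℤ),
            ((dmat : Matrix (Fin n) (Fin n) ℂ)).IsDiag ∧ g = dmat * W ^ k)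
    ∧ Subgroup.centralizer {(QuotientGroup.mk S : PGLn n)} =
        Subgroup.closure ({x : PGLn n | ∃ d : GL (Fin n) ℂ,
            ((d : Matrix (Fin n) (Fin n) ℂ)).IsDiag ∧ QuotientGroup.mk d = x}
          ∪ {(QuotientGroup.mk W : PGLn n)})
    ∧ ∃ φ : Multiplicative (ZMod n) →* MulAut ↥(diagTorusPGL n),
        Nonempty (↥(Subgroup.centralizer {(QuotientGroup.mk S : PGLn n)}) ≃*
          (↥(diagTorusPGL n) ⋊[φ] Multiplicative (ZMod n))) := by
  refine ⟨?_, ?_, ?_⟩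
  · intro g
    constructor
    · rintro ⟨lam, h0, hEq⟩
      obtain ⟨dmat, m, hdiag, rfl⟩ := Stmt6Aux.part1_forward hζ hS hW h0 hEq
      exact ⟨dmat, (m : ℤ), hdiag, by rw [zpow_natCast]⟩
    · rintro ⟨dmat, k, hdiag, rfl⟩
      exact Stmt6Aux.part1_backward hζ hS hW dmat k hdiag
  · exact Stmt6Aux.part2 hζ hS hW
  · exact Stmt6Aux.part3 hζ hS hW
end

section
/- Let n ≥ 1 and let λ be a partition of n with part i occurring r_i times. Then Γ(λ) ⊆ PGL_n(ℂ) contains a pair (s,h) of commuting semisimple elements whose simultaneous centralizer {g ∈ Γ(λ) : gs = sg and gh = hg} is finite if and only if exactly one r_i is nonzero, i.e. λ is rectangular. Moreover, when λ = (k, k, …, k) with r parts (so n = kr), the group Γ(λ) is isomorphic to PGL_r(ℂ). -/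
open Matrix

/-- scalar unit -/
noncomputable def scalarGL (n : ℕ) (c : ℂˣ) : GL (Fin n) ℂ :=
  ⟨(c : ℂ) • 1, ((c⁻¹ : ℂˣ) : ℂ) • 1, by
    rw [Matrix.smul_mul, Matrix.mul_smul, smul_smul, one_mul]
    norm_cast
    rw [mul_inv_cancel, Units.val_one, one_smul], by
    rw [Matrix.smul_mul, Matrix.mul_smul, smul_smul, one_mul]
    norm_cast
    rw [inv_mul_cancel, Units.val_one, one_smul]⟩

lemma scalarGL_mem_center (n : ℕ) (c : ℂˣ) : scalarGL n c ∈ Subgroup.center (GL (Fin n) ℂ) := by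
  rw [Subgroup.mem_center_iff]
  intro g
  ext : 1
  show (g.val * _ : Matrix _ _ ℂ) = _ * g.val
  simp [scalarGL, Matrix.mul_smul, Matrix.smul_mul]

lemma val_eq_smul_one_of_mem_center {n : ℕ} (z : GL (Fin n) ℂ)
    (hz : z ∈ Subgroup.center (GL (Fin n) ℂ)) :
    ∃ c : ℂ, (z : Matrix (Fin n) (Fin n) ℂ) = c • 1 := by
  rw [Subgroup.mem_center_iff] at hz
  have h : (z : Matrix (Fin n) (Fin n) ℂ) ∈ Set.range (Matrix.scalar (Fin n)) := by
    apply Matrix.mem_range_scalar_of_commute_transvectionStruct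
    intro t
    let u : GL (Fin n) ℂ := ⟨t.toMatrix, t.inv.toMatrix, t.mul_inv, t.inv_mul⟩
    have hu : (u : Matrix (Fin n) (Fin n) ℂ) = t.toMatrix := rfl
    have := hz u
    have : (u * z : GL (Fin n) ℂ).val = (z * u : GL (Fin n) ℂ).val := by rw [this]
    simpa [Commute, SemiconjBy, hu] using this
  obtain ⟨c, hc⟩ := h
  exact ⟨c, by rw [← hc]; simp [Matrix.scalar_apply, Matrix.smul_one_eq_diagonal]⟩

open QuotientGroup

lemma mk_mul_comm_of_scalar {n : ℕ} (A B : GL (Fin n) ℂ) (c : ℂˣ)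
    (h : (A : Matrix (Fin n) (Fin n) ℂ) * (B : Matrix (Fin n) (Fin n) ℂ)
      = (c : ℂ) • ((B : Matrix (Fin n) (Fin n) ℂ) * (A : Matrix (Fin n) (Fin n) ℂ))) :
    (QuotientGroup.mk A : PGLn n) * QuotientGroup.mk B
      = QuotientGroup.mk B * QuotientGroup.mk A := by
  have key : A * B = scalarGL n c * (B * A) := by
    ext : 1
    show (A : Matrix (Fin n) (Fin n) ℂ) * B = ((c : ℂ) • 1) * ((B : Matrix (Fin n) (Fin n) ℂ) * A)
    rw [h, Matrix.smul_mul, one_mul]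
  rw [← QuotientGroup.mk_mul, ← QuotientGroup.mk_mul, key, QuotientGroup.mk_mul,
    QuotientGroup.eq_one_iff _ |>.mpr (scalarGL_mem_center n c), one_mul]

lemma exists_scalar_of_mk_comm {n : ℕ} (A B : GL (Fin n) ℂ)
    (h : (QuotientGroup.mk A : PGLn n) * QuotientGroup.mk B
      = QuotientGroup.mk B * QuotientGroup.mk A) :
    ∃ c : ℂ, (B : Matrix (Fin n) (Fin n) ℂ) * (A : Matrix (Fin n) (Fin n) ℂ)
      = c • ((A : Matrix (Fin n) (Fin n) ℂ) * (B : Matrix (Fin n) (Fin n) ℂ)) := by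
  rw [← QuotientGroup.mk_mul, ← QuotientGroup.mk_mul, QuotientGroup.eq] at h
  obtain ⟨c, hc⟩ := val_eq_smul_one_of_mem_center _ h
  refine ⟨c, ?_⟩
  have h2 : B * A = (A * B) * ((A * B)⁻¹ * (B * A)) := by group
  have h3 : (B * A : GL (Fin n) ℂ).val = (A * B : GL (Fin n) ℂ).val * (c • 1) := by
    rw [h2, Units.val_mul, hc]
  simpa [Matrix.mul_smul] using h3

lemma exists_scalar_of_mk_eq {n : ℕ} (A B : GL (Fin n) ℂ)
    (h : (QuotientGroup.mk A : PGLn n) = QuotientGroup.mk B) :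
    ∃ c : ℂ, (B : Matrix (Fin n) (Fin n) ℂ) = c • (A : Matrix (Fin n) (Fin n) ℂ) := by
  rw [QuotientGroup.eq] at h
  obtain ⟨c, hc⟩ := val_eq_smul_one_of_mem_center _ h
  refine ⟨c, ?_⟩
  have h2 : B = A * (A⁻¹ * B) := by group
  have h3 : (B : Matrix (Fin n) (Fin n) ℂ) = (A : Matrix (Fin n) (Fin n) ℂ) * (c • 1) := by
    rw [h2, Units.val_mul, hc]
  simpa [Matrix.mul_smul] using h3

lemma smul_ne_zero_coeff {n : ℕ} [NeZero n] (A : GL (Fin n) ℂ) (c : ℂ)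
    (N : Matrix (Fin n) (Fin n) ℂ)
    (h : (A : Matrix (Fin n) (Fin n) ℂ) = c • N) : c ≠ 0 := by
  intro hc
  subst hc
  have h1 : (A : Matrix (Fin n) (Fin n) ℂ) * ((A⁻¹ : GL (Fin n) ℂ) : Matrix (Fin n) (Fin n) ℂ)
      = 1 := by
    rw [← Units.val_mul, mul_inv_cancel, Units.val_one]
  rw [h, zero_smul, Matrix.zero_mul] at h1
  have i : Fin n := ⟨0, Nat.pos_of_ne_zero (NeZero.ne n)⟩
  have := congrFun (congrFun h1 i) i
  simp at this

open Matrix Kronecker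

noncomputable def kronRingHom (ρ k : ℕ) :
    Matrix (Fin ρ) (Fin ρ) ℂ →+* Matrix (Fin ρ × Fin k) (Fin ρ × Fin k) ℂ where
  toFun x := x ⊗ₖ (1 : Matrix (Fin k) (Fin k) ℂ)
  map_one' := Matrix.one_kronecker_one
  map_mul' x y := by rw [← Matrix.mul_kronecker_mul, one_mul]
  map_zero' := Matrix.zero_kronecker 1
  map_add' x y := Matrix.add_kronecker x y 1

noncomputable def F2 {ρ k N : ℕ} (e' : (Fin ρ × Fin k) ≃ Fin N) :
    Matrix (Fin ρ) (Fin ρ) ℂ →+* Matrix (Fin N) (Fin N) ℂ :=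
  ((Matrix.reindexAlgEquiv ℂ ℂ e').toRingHom).comp (kronRingHom ρ k)

lemma F2_apply {ρ k N : ℕ} (e' : (Fin ρ × Fin k) ≃ Fin N) (x : Matrix (Fin ρ) (Fin ρ) ℂ) :
    F2 e' x = Matrix.reindex e' e' (x ⊗ₖ (1 : Matrix (Fin k) (Fin k) ℂ)) := rfl

lemma F2_smul {ρ k N : ℕ} (e' : (Fin ρ × Fin k) ≃ Fin N) (c : ℂ)
    (x : Matrix (Fin ρ) (Fin ρ) ℂ) : F2 e' (c • x) = c • F2 e' x := by
  simp [F2_apply, Matrix.smul_kronecker, Matrix.reindex_apply, Matrix.submatrix_smul]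

noncomputable def psi2 {ρ k N : ℕ} (e' : (Fin ρ × Fin k) ≃ Fin N) :
    GL (Fin ρ) ℂ →* PGLn N :=
  (QuotientGroup.mk' (Subgroup.center (GL (Fin N) ℂ))).comp
    (Units.map (F2 e').toMonoidHom)

lemma psi2_apply {ρ k N : ℕ} (e' : (Fin ρ × Fin k) ≃ Fin N) (u : GL (Fin ρ) ℂ) :
    psi2 e' u = QuotientGroup.mk (Units.map (F2 e').toMonoidHom u) := rfl

lemma val_map_F2 {ρ k N : ℕ} (e' : (Fin ρ × Fin k) ≃ Fin N) (u : GL (Fin ρ) ℂ) :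
    ((Units.map (F2 e').toMonoidHom u : GL (Fin N) ℂ) : Matrix (Fin N) (Fin N) ℂ)
      = F2 e' (u : Matrix (Fin ρ) (Fin ρ) ℂ) := rfl

lemma ker_psi2 {ρ k N : ℕ} (hk : 1 ≤ k) (hρ : 1 ≤ ρ) (e' : (Fin ρ × Fin k) ≃ Fin N) :
    (psi2 e').ker = Subgroup.center (GL (Fin ρ) ℂ) := by
  have : NeZero ρ := ⟨by omega⟩
  have z0 : Fin k := ⟨0, by omega⟩
  ext u
  rw [MonoidHom.mem_ker, psi2_apply, QuotientGroup.eq_one_iff]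
  constructor
  · intro h
    obtain ⟨c, hc⟩ := val_eq_smul_one_of_mem_center _ h
    rw [val_map_F2] at hc
    have hx : (u : Matrix (Fin ρ) (Fin ρ) ℂ) = c • 1 := by
      ext a b
      have h2 := congrFun (congrFun hc (e' (a, z0))) (e' (b, z0))
      have he : (e' (a, z0) = e' (b, z0)) ↔ a = b := by
        rw [Equiv.apply_eq_iff_eq]
        exact ⟨fun h => (Prod.ext_iff.mp h).1, fun h => by rw [h]⟩
      simp only [F2_apply, Matrix.reindex_apply, Matrix.submatrix_apply,
        Equiv.symm_apply_apply, Matrix.kroneckerMap_apply, Matrix.one_apply_eq, mul_one,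
        Matrix.smul_apply, Matrix.one_apply, smul_eq_mul] at h2 ⊢
      rw [h2]
      simp only [he]
    have hc0 : c ≠ 0 := smul_ne_zero_coeff u c 1 hx
    have : u = scalarGL ρ (Units.mk0 c hc0) := by
      ext : 1
      simpa [scalarGL] using hx
    rw [this]
    exact scalarGL_mem_center ρ _
  · intro h
    obtain ⟨c, hc⟩ := val_eq_smul_one_of_mem_center _ h
    have hc0 : c ≠ 0 := smul_ne_zero_coeff u c 1 hc
    have : Units.map (F2 e').toMonoidHom u = scalarGL N (Units.mk0 c hc0) := by
      ext : 1
      rw [val_map_F2, hc]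
      show F2 e' (c • 1) = c • (1 : Matrix (Fin N) (Fin N) ℂ)
      rw [F2_smul, _root_.map_one]
    rw [this]
    exact scalarGL_mem_center N _

lemma range_psi2 {ρ k N : ℕ} (hk : 1 ≤ k) (e' : (Fin ρ × Fin k) ≃ Fin N) :
    {p : PGLn N | ∃ A : GL (Fin N) ℂ,
        ((A : Matrix (Fin N) (Fin N) ℂ) ∈ Set.range
          fun x : Matrix (Fin ρ) (Fin ρ) ℂ =>
            Matrix.reindex e' e' (x ⊗ₖ (1 : Matrix (Fin k) (Fin k) ℂ))) ∧
        QuotientGroup.mk A = p} = ((psi2 e').range : Set (PGLn N)) := by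
  ext p
  simp only [Set.mem_setOf_eq, SetLike.mem_coe, MonoidHom.mem_range]
  constructor
  · rintro ⟨A, ⟨x, hx⟩, rfl⟩
    have hA : IsUnit (A : Matrix (Fin N) (Fin N) ℂ).det :=
      (Matrix.isUnit_iff_isUnit_det _).mp ⟨A, rfl⟩
    rw [← hx, Matrix.det_reindex_self, Matrix.det_kronecker, Matrix.det_one, one_pow,
      mul_one, Fintype.card_fin] at hA
    have hdet : IsUnit x.det := by
      rw [isUnit_iff_ne_zero] at hA ⊢
      exact fun h0 => hA (by rw [h0, zero_pow (by omega)])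
    have hxu : IsUnit x := (Matrix.isUnit_iff_isUnit_det x).mpr hdet
    refine ⟨hxu.unit, ?_⟩
    rw [psi2_apply]
    congr 1
    ext : 1
    rw [val_map_F2, F2_apply, hxu.unit_spec]
    exact hx
  · rintro ⟨u, rfl⟩
    exact ⟨Units.map (F2 e').toMonoidHom u, ⟨(u : Matrix (Fin ρ) (Fin ρ) ℂ), rfl⟩, rfl⟩

theorem part2final (k ρ N : ℕ) (hk : 1 ≤ k) (hρ : 1 ≤ ρ) (hN : N = k * ρ)
    (e' : (Fin ρ × Fin k) ≃ Fin N) :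
    Nonempty (↥(Subgroup.closure {p : PGLn N | ∃ A : GL (Fin N) ℂ,
        ((A : Matrix (Fin N) (Fin N) ℂ) ∈ Set.range
          fun x : Matrix (Fin ρ) (Fin ρ) ℂ =>
            Matrix.reindex e' e' (x ⊗ₖ (1 : Matrix (Fin k) (Fin k) ℂ))) ∧
        QuotientGroup.mk A = p}) ≃* PGLn ρ) := by
  rw [range_psi2 hk e', Subgroup.closure_eq]
  exact ⟨((QuotientGroup.quotientKerEquivRange (psi2 e')).symm.trans
    (QuotientGroup.quotientMulEquivOfEq (ker_psi2 hk hρ e')))⟩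

noncomputable def F1 {ℓ n : ℕ} (r : Fin ℓ → ℕ)
    (e : ((i : Fin ℓ) × (Fin (r i) × Fin ((i : ℕ) + 1))) ≃ Fin n) :
    ((i : Fin ℓ) → Matrix (Fin (r i)) (Fin (r i)) ℂ) →+* Matrix (Fin n) (Fin n) ℂ :=
  ((Matrix.reindexAlgEquiv ℂ ℂ e).toRingHom).comp
    ((Matrix.blockDiagonal'RingHom (fun i : Fin ℓ => Fin (r i) × Fin ((i : ℕ) + 1)) ℂ).comp
      (Pi.ringHom fun i => (kronRingHom (r i) ((i : ℕ) + 1)).comp (Pi.evalRingHom _ i)))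

lemma F1_apply {ℓ n : ℕ} (r : Fin ℓ → ℕ)
    (e : ((i : Fin ℓ) × (Fin (r i) × Fin ((i : ℕ) + 1))) ≃ Fin n)
    (x : (i : Fin ℓ) → Matrix (Fin (r i)) (Fin (r i)) ℂ) :
    F1 r e x = Matrix.reindex e e (Matrix.blockDiagonal'
      fun i => (x i) ⊗ₖ (1 : Matrix (Fin ((i : ℕ) + 1)) (Fin ((i : ℕ) + 1)) ℂ)) := rfl

open Kronecker in
/-- The block-diagonal matrix `⊕_i (x_i ⊗ Id_{i+1})` associated to a tuple
`x ∈ ∏_i Mat_{r_i}(ℂ)`; the index `i : Fin ℓ` stands for the part `i+1` of the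
partition. -/
noncomputable def blockKron (ℓ : ℕ) (r : Fin ℓ → ℕ)
    (x : (i : Fin ℓ) → Matrix (Fin (r i)) (Fin (r i)) ℂ) :
    Matrix ((i : Fin ℓ) × (Fin (r i) × Fin ((i : ℕ) + 1)))
      ((i : Fin ℓ) × (Fin (r i) × Fin ((i : ℕ) + 1))) ℂ :=
  Matrix.blockDiagonal' fun i =>
    (x i) ⊗ₖ (1 : Matrix (Fin ((i : ℕ) + 1)) (Fin ((i : ℕ) + 1)) ℂ)

/-- The subset `H(λ)` of `n×n` matrices of the block form `⊕_i (x_i ⊗ Id_i)`, transported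
to `Fin n` via an identification `e` of the index sets. -/
noncomputable def Hlam (ℓ : ℕ) (r : Fin ℓ → ℕ) (n : ℕ)
    (e : ((i : Fin ℓ) × (Fin (r i) × Fin ((i : ℕ) + 1))) ≃ Fin n) :
    Set (Matrix (Fin n) (Fin n) ℂ) :=
  Set.range fun x : (i : Fin ℓ) → Matrix (Fin (r i)) (Fin (r i)) ℂ =>
    Matrix.reindex e e (blockKron ℓ r x)

/-- `Γ(λ)`: the image of (the invertible elements of) `H(λ)` in `PGL_n(ℂ)`. -/
noncomputable def GammaLam (ℓ : ℕ) (r : Fin ℓ → ℕ) (n : ℕ)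
    (e : ((i : Fin ℓ) × (Fin (r i) × Fin ((i : ℕ) + 1))) ≃ Fin n) :
    Set (PGLn n) :=
  {p : PGLn n | ∃ A : GL (Fin n) ℂ,
    (A : Matrix (Fin n) (Fin n) ℂ) ∈ Hlam ℓ r n e ∧ QuotientGroup.mk A = p}

/-- An element of `Γ(λ)` is semisimple if it is the image of a diagonalizable matrix
in `H(λ)`. -/
noncomputable def IsSemisimpleGammaLam (ℓ : ℕ) (r : Fin ℓ → ℕ) (n : ℕ)
    (e : ((i : Fin ℓ) × (Fin (r i) × Fin ((i : ℕ) + 1))) ≃ Fin n) (s : PGLn n) : Prop :=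
  ∃ A : GL (Fin n) ℂ, (A : Matrix (Fin n) (Fin n) ℂ) ∈ Hlam ℓ r n e ∧
    (∃ g : GL (Fin n) ℂ, ((g * A * g⁻¹ : GL (Fin n) ℂ) : Matrix (Fin n) (Fin n) ℂ).IsDiag) ∧
    QuotientGroup.mk A = s

section PartOne

variable {ℓ n : ℕ} {r : Fin ℓ → ℕ}
  (e : ((i : Fin ℓ) × (Fin (r i) × Fin ((i : ℕ) + 1))) ≃ Fin n)

lemma F1_smul (c : ℂ) (x : (i : Fin ℓ) → Matrix (Fin (r i)) (Fin (r i)) ℂ) :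
    F1 r e (c • x) = c • F1 r e x := by
  have h1 : (fun i => ((c • x) i) ⊗ₖ (1 : Matrix (Fin ((i : ℕ) + 1)) (Fin ((i : ℕ) + 1)) ℂ))
      = c • (fun i => (x i) ⊗ₖ (1 : Matrix (Fin ((i : ℕ) + 1)) (Fin ((i : ℕ) + 1)) ℂ)) := by
    funext i
    exact Matrix.smul_kronecker c (x i) 1
  rw [F1_apply, F1_apply, h1, Matrix.blockDiagonal'_smul, Matrix.reindex_apply,
    Matrix.reindex_apply, Matrix.submatrix_smul]
  rfl

lemma F1_entry_same (x : (i : Fin ℓ) → Matrix (Fin (r i)) (Fin (r i)) ℂ) (i : Fin ℓ)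
    (a b : Fin (r i)) (c d : Fin ((i : ℕ) + 1)) :
    F1 r e x (e ⟨i, (a, c)⟩) (e ⟨i, (b, d)⟩) = x i a b * (if c = d then 1 else 0) := by
  simp only [F1_apply, Matrix.reindex_apply, Matrix.submatrix_apply, Equiv.symm_apply_apply,
    Matrix.blockDiagonal'_apply_eq, Matrix.kroneckerMap_apply, Matrix.one_apply]

lemma F1_entry_ne (x : (i : Fin ℓ) → Matrix (Fin (r i)) (Fin (r i)) ℂ) {i j : Fin ℓ}
    (hij : i ≠ j) (p : Fin (r i) × Fin ((i : ℕ) + 1)) (q : Fin (r j) × Fin ((j : ℕ) + 1)) :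
    F1 r e x (e ⟨i, p⟩) (e ⟨j, q⟩) = 0 := by
  simp only [F1_apply, Matrix.reindex_apply, Matrix.submatrix_apply, Equiv.symm_apply_apply]
  simp [Matrix.blockDiagonal'_apply, hij]

lemma F1_inj : Function.Injective (F1 r e) := by
  intro x y hxy
  funext i
  ext a b
  have := congrFun (congrFun hxy (e ⟨i, (a, ⟨0, Nat.succ_pos _⟩)⟩)) (e ⟨i, (b, ⟨0, Nat.succ_pos _⟩)⟩)
  rw [F1_entry_same, F1_entry_same, if_pos rfl, mul_one, mul_one] at this
  exact this

lemma F1_isDiag (x : (i : Fin ℓ) → Matrix (Fin (r i)) (Fin (r i)) ℂ)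
    (hx : ∀ i, (x i).IsDiag) : (F1 r e x).IsDiag := by
  intro p q hpq
  obtain ⟨⟨i, a, c⟩, rfl⟩ : ∃ u, e u = p := ⟨e.symm p, e.apply_symm_apply p⟩
  obtain ⟨⟨j, b, d⟩, rfl⟩ : ∃ u, e u = q := ⟨e.symm q, e.apply_symm_apply q⟩
  rcases eq_or_ne i j with rfl | hij
  · rw [F1_entry_same]
    rcases eq_or_ne a b with rfl | hab
    · rcases eq_or_ne c d with rfl | hcd
      · exact absurd rfl hpq
      · rw [if_neg hcd, mul_zero]
    · rw [hx i hab, zero_mul]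
  · exact F1_entry_ne e x hij _ _

lemma block_ne_zero (A : GL (Fin n) ℂ) (x : (i : Fin ℓ) → Matrix (Fin (r i)) (Fin (r i)) ℂ)
    (hA : F1 r e x = (A : Matrix (Fin n) (Fin n) ℂ)) (i : Fin ℓ) (hi : r i ≠ 0) :
    x i ≠ 0 := by
  intro h0
  set p := e ⟨i, (⟨0, Nat.pos_of_ne_zero hi⟩, ⟨0, Nat.succ_pos _⟩)⟩ with hp
  have hrow : ∀ q : Fin n, (A : Matrix (Fin n) (Fin n) ℂ) p q = 0 := by
    intro q
    obtain ⟨⟨j, b, d⟩, rfl⟩ : ∃ u, e u = q := ⟨e.symm q, e.apply_symm_apply q⟩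
    rcases eq_or_ne i j with rfl | hij
    · rw [← hA, hp, F1_entry_same, h0]
      simp
    · rw [← hA, hp, F1_entry_ne e x hij]
  have h1 : ((A : Matrix (Fin n) (Fin n) ℂ) *
      ((A⁻¹ : GL (Fin n) ℂ) : Matrix (Fin n) (Fin n) ℂ)) p p = 1 := by
    rw [← Units.val_mul, mul_inv_cancel, Units.val_one, Matrix.one_apply_eq]
  rw [Matrix.mul_apply] at h1
  simp only [hrow, zero_mul, Finset.sum_const_zero] at h1
  exact one_ne_zero h1.symm

lemma hlam_mem (x : (i : Fin ℓ) → Matrix (Fin (r i)) (Fin (r i)) ℂ) :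
    F1 r e x ∈ Hlam ℓ r n e := ⟨x, rfl⟩

lemma centralizer_infinite (i₀ i₁ : Fin ℓ) (hne : i₀ ≠ i₁) (h₀ : r i₀ ≠ 0) (h₁ : r i₁ ≠ 0)
    (s h : PGLn n) (hs : s ∈ GammaLam ℓ r n e) (hh : h ∈ GammaLam ℓ r n e) :
    {g : PGLn n | g ∈ GammaLam ℓ r n e ∧ g * s = s * g ∧ g * h = h * g}.Infinite := by
  classical
  -- the scalar-on-one-block tuples
  set y : ℂ → ((i : Fin ℓ) → Matrix (Fin (r i)) (Fin (r i)) ℂ) :=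
    fun t i => if i = i₁ then t • 1 else 1 with hy
  have hyy : ∀ t t' : ℂ, y t * y t' = y (t * t') := by
    intro t t'
    funext i
    simp only [hy, Pi.mul_apply]
    by_cases hi : i = i₁
    · simp [hi, Matrix.smul_mul, Matrix.mul_smul, smul_smul, mul_comm]
    · simp [hi]
  have hy1 : y 1 = 1 := by
    funext i
    simp only [hy]
    split <;> simp
  have hycomm : ∀ (t : ℂ) (z : (i : Fin ℓ) → Matrix (Fin (r i)) (Fin (r i)) ℂ),
      y t * z = z * y t := by
    intro t z
    funext i
    simp only [hy, Pi.mul_apply]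
    by_cases hi : i = i₁
    · simp [hi, Matrix.smul_mul, Matrix.mul_smul]
    · simp [hi]
  have hU : ∀ u : ℕ, ∃ U : GL (Fin n) ℂ, (U : Matrix (Fin n) (Fin n) ℂ) = F1 r e (y (u + 1)) := by
    intro u
    have hne0 : ((u : ℂ) + 1) ≠ 0 := by
      exact Nat.cast_add_one_ne_zero u
    refine ⟨⟨F1 r e (y ((u : ℂ) + 1)), F1 r e (y ((u : ℂ) + 1)⁻¹), ?_, ?_⟩, rfl⟩
    · rw [← map_mul (F1 r e), hyy, mul_inv_cancel₀ hne0, hy1, _root_.map_one]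
    · rw [← map_mul (F1 r e), hyy, inv_mul_cancel₀ hne0, hy1, _root_.map_one]
  choose U hUval using hU
  have hUcomm : ∀ (u : ℕ) (B : GL (Fin n) ℂ),
      (B : Matrix (Fin n) (Fin n) ℂ) ∈ Hlam ℓ r n e →
      (QuotientGroup.mk (U u) : PGLn n) * QuotientGroup.mk B
        = QuotientGroup.mk B * QuotientGroup.mk (U u) := by
    intro u B hB
    obtain ⟨z, hz⟩ := hB
    have : U u * B = B * U u := by
      ext : 1
      rw [Units.val_mul, Units.val_mul, hUval, ← hz]
      show F1 r e _ * F1 r e z = F1 r e z * F1 r e _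
      rw [← map_mul (F1 r e), ← map_mul (F1 r e), hycomm]
    rw [← QuotientGroup.mk_mul, ← QuotientGroup.mk_mul, this]
  obtain ⟨S, hSmem, rfl⟩ := hs
  obtain ⟨H, hHmem, rfl⟩ := hh
  apply Set.infinite_of_injective_forall_mem
    (f := fun u : ℕ => (QuotientGroup.mk (U u) : PGLn n))
  · intro u v huv
    obtain ⟨cc, hcc⟩ := exists_scalar_of_mk_eq _ _ huv
    rw [hUval, hUval, ← F1_smul] at hcc
    have heq := F1_inj e hcc
    have a0 : Fin (r i₀) := ⟨0, Nat.pos_of_ne_zero h₀⟩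
    have b0 : Fin (r i₁) := ⟨0, Nat.pos_of_ne_zero h₁⟩
    have h2 := congrFun (congrFun (congrFun heq i₀) a0) a0
    have h3 := congrFun (congrFun (congrFun heq i₁) b0) b0
    simp only [hy, if_neg hne, if_pos, Pi.smul_apply, Matrix.smul_apply, Matrix.one_apply_eq,
      smul_eq_mul, mul_one] at h2 h3
    rw [← h2, one_mul] at h3
    have h4 : (v : ℂ) = (u : ℂ) := by
      have := h3
      field_simp at this
      linear_combination this
    exact_mod_cast h4.symm
  · intro u
    refine ⟨⟨U u, (hUval u) ▸ hlam_mem e _, rfl⟩, hUcomm u S hSmem, hUcomm u H hHmem⟩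

section LocalBlock

open scoped Fin.NatCast Fin.CommRing

variable {q : ℕ} [NeZero q] {ξ : ℂ} (hξ : IsPrimitiveRoot ξ q)

/-- cyclic shift matrix -/
def wq (q : ℕ) [NeZero q] : Matrix (Fin q) (Fin q) ℂ :=
  Matrix.of fun a b : Fin q => if a = b + 1 then (1 : ℂ) else 0

def dq (q : ℕ) (ξ : ℂ) : Matrix (Fin q) (Fin q) ℂ :=
  Matrix.diagonal fun a : Fin q => ξ ^ (a : ℕ)

def vq (q : ℕ) (ξ : ℂ) : Matrix (Fin q) (Fin q) ℂ :=
  Matrix.of fun a b : Fin q => ξ ^ ((a : ℕ) * (b : ℕ))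

noncomputable def vq' (q : ℕ) (ξ : ℂ) : Matrix (Fin q) (Fin q) ℂ :=
  Matrix.of fun a b : Fin q => (q : ℂ)⁻¹ * (ξ ^ ((a : ℕ) * (b : ℕ)))⁻¹

def cq (q : ℕ) [NeZero q] (ξ : ℂ) (m j : ℕ) : Matrix (Fin q) (Fin q) ℂ :=
  Matrix.of fun a b : Fin q => if b = a + (m : Fin q) then ξ ^ (j * (a : ℕ)) else 0

noncomputable def cq' (q : ℕ) [NeZero q] (ξ : ℂ) (m j : ℕ) : Matrix (Fin q) (Fin q) ℂ :=
  Matrix.of fun a b : Fin q => if a = b + (m : Fin q) then (ξ ^ (j * (b : ℕ)))⁻¹ else 0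

lemma pow_mod_q {ξ : ℂ} (hξ1 : ξ ^ q = 1) (u : ℕ) : ξ ^ (u % q) = ξ ^ u := by
  conv_rhs => rw [← Nat.mod_add_div u q]
  rw [pow_add, pow_mul, hξ1, one_pow, mul_one]

lemma pow_val_add {ξ : ℂ} (hξ1 : ξ ^ q = 1) (a b : Fin q) :
    ξ ^ ((a + b : Fin q) : ℕ) = ξ ^ ((a : ℕ) + (b : ℕ)) := by
  rw [Fin.val_add, pow_mod_q hξ1]

lemma pow_val_succ {ξ : ℂ} (hξ1 : ξ ^ q = 1) (b : Fin q) :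
    ξ ^ ((b + 1 : Fin q) : ℕ) = ξ ^ (b : ℕ) * ξ := by
  rw [Fin.val_add, pow_mod_q hξ1, pow_add, Fin.val_one', pow_mod_q hξ1, pow_one]

include hξ

lemma hxi_ne_zero : ξ ≠ 0 := fun h0 => by
  have h1 := hξ.pow_eq_one
  rw [h0, zero_pow (NeZero.ne q)] at h1
  exact zero_ne_one h1

omit hξ

lemma wq_mul (X : Matrix (Fin q) (Fin q) ℂ) (a b : Fin q) :
    (wq q * X) a b = X (a - 1) b := by
  rw [Matrix.mul_apply]
  have : ∀ c : Fin q, (wq q a c) * X c b = if c = a - 1 then X c b else 0 := by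
    intro c
    have hiff : (a = c + 1) ↔ (c = a - 1) := by
      constructor
      · intro h; rw [h]; ring
      · intro h; rw [h]; ring
    simp only [wq, Matrix.of_apply]
    rw [if_congr hiff rfl rfl]
    split <;> simp
  simp only [this, Finset.sum_ite_eq' Finset.univ (a - 1) (fun c => X c b), Finset.mem_univ,
    if_true]

lemma mul_wq (X : Matrix (Fin q) (Fin q) ℂ) (a b : Fin q) :
    (X * wq q) a b = X a (b + 1) := by
  rw [Matrix.mul_apply]
  have : ∀ c : Fin q, X a c * (wq q c b) = if c = b + 1 then X a c else 0 := by
    intro c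
    simp only [wq, Matrix.of_apply]
    split <;> simp
  simp only [this, Finset.sum_ite_eq' Finset.univ (b + 1) (fun c => X a c), Finset.mem_univ,
    if_true]

lemma wq_mul_wq_transpose : wq q * (wq q)ᵀ = 1 := by
  ext a b
  rw [wq_mul]
  simp only [Matrix.transpose_apply, wq, Matrix.of_apply, Matrix.one_apply]
  by_cases hab : a = b
  · rw [if_pos (by rw [hab]; ring), if_pos hab]
  · rw [if_neg (fun hcon => hab (by rw [hcon]; ring)), if_neg hab]

include hξ in
lemma dq_mul_wq : dq q ξ * wq q = ξ • (wq q * dq q ξ) := by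
  have hξ1 : ξ ^ q = 1 := hξ.pow_eq_one
  ext a b
  simp only [dq, Matrix.diagonal_mul, Matrix.smul_apply, Matrix.mul_diagonal, wq,
    Matrix.of_apply, smul_eq_mul]
  by_cases hab : a = b + 1
  · subst hab
    simp only [if_pos rfl]
    rw [pow_val_succ hξ1]
    ring
  · simp only [if_neg hab]
    ring

include hξ in
lemma vq_mul_wq : vq q ξ * wq q = dq q ξ * vq q ξ := by
  have hξ1 : ξ ^ q = 1 := hξ.pow_eq_one
  ext a b
  rw [mul_wq]
  simp only [vq, dq, Matrix.diagonal_mul, Matrix.of_apply]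
  have h1 : ξ ^ ((b + 1 : Fin q) : ℕ) = ξ ^ ((b : ℕ) + 1) := by
    rw [pow_val_succ hξ1, ← pow_succ]
  rw [mul_comm (a : ℕ) ((b + 1 : Fin q) : ℕ), pow_mul, h1, ← pow_mul]
  ring

include hξ in
lemma vq_mul_vq' : vq q ξ * vq' q ξ = 1 := by
  have hξ0 : ξ ≠ 0 := hxi_ne_zero hξ
  ext a b
  rw [Matrix.mul_apply]
  simp only [vq, vq', Matrix.of_apply]
  set η : ℂ := ξ ^ (a : ℕ) * (ξ ^ (b : ℕ))⁻¹ with hη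
  have hterm : ∀ c : Fin q, ξ ^ ((a : ℕ) * (c : ℕ)) * ((q : ℂ)⁻¹ * (ξ ^ ((c : ℕ) * (b : ℕ)))⁻¹)
      = (q : ℂ)⁻¹ * η ^ (c : ℕ) := by
    intro c
    rw [hη, mul_pow, ← pow_mul, inv_pow, ← pow_mul, mul_comm (c : ℕ) (b : ℕ)]
    ring
  rw [Finset.sum_congr rfl (fun c _ => hterm c), ← Finset.mul_sum]
  have hsum : ∑ c : Fin q, η ^ (c : ℕ) = ∑ u ∈ Finset.range q, η ^ u :=
    Fin.sum_univ_eq_sum_range (fun u => η ^ u) q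
  rw [hsum]
  rcases eq_or_ne a b with rfl | hab
  · have hη1 : η = 1 := mul_inv_cancel₀ (pow_ne_zero _ hξ0)
    rw [hη1]
    simp only [one_pow, Finset.sum_const, Finset.card_range, nsmul_eq_mul, mul_one,
      Matrix.one_apply_eq]
    rw [inv_mul_cancel₀ (Nat.cast_ne_zero.mpr (NeZero.ne q))]
  · have hη1 : η ≠ 1 := by
      intro h1
      apply hab
      exact Fin.val_injective (hξ.pow_inj a.isLt b.isLt ((mul_inv_eq_one₀ (pow_ne_zero _ hξ0)).mp h1))
    have hηq : η ^ q = 1 := by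
      have hb : ((ξ ^ (b : ℕ))⁻¹) ^ q = 1 := by
        rw [inv_pow, ← pow_mul, mul_comm, pow_mul, hξ.pow_eq_one, one_pow, inv_one]
      have ha : (ξ ^ (a : ℕ)) ^ q = 1 := by
        rw [← pow_mul, mul_comm, pow_mul, hξ.pow_eq_one, one_pow]
      rw [hη, mul_pow, ha, hb, mul_one]
    have hgeom : (∑ u ∈ Finset.range q, η ^ u) * (η - 1) = 0 := by
      rw [geom_sum_mul, hηq, sub_self]
    have : (∑ u ∈ Finset.range q, η ^ u) = 0 := by
      rcases mul_eq_zero.mp hgeom with h | h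
      · exact h
      · exact absurd (sub_eq_zero.mp h) hη1
    rw [this, mul_zero, Matrix.one_apply_ne hab]

include hξ in
lemma vq'_mul_vq : vq' q ξ * vq q ξ = 1 :=
  mul_eq_one_comm.mp (vq_mul_vq' hξ)

include hξ in
lemma cq_mul_cq' (m j : ℕ) : cq q ξ m j * cq' q ξ m j = 1 := by
  have hξ0 : ξ ≠ 0 := hxi_ne_zero hξ
  ext a b
  rw [Matrix.mul_apply]
  simp only [cq, cq', Matrix.of_apply, ite_mul, zero_mul, mul_ite, mul_zero]
  rw [Finset.sum_ite_eq' Finset.univ (b + (m : Fin q))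
    (fun c => if c = a + (m : Fin q) then ξ ^ (j * (a : ℕ)) * (ξ ^ (j * (b : ℕ)))⁻¹ else 0)]
  rw [if_pos (Finset.mem_univ _)]
  rcases eq_or_ne a b with rfl | hab
  · rw [if_pos rfl, Matrix.one_apply_eq, mul_inv_cancel₀ (pow_ne_zero _ hξ0)]
  · rw [if_neg (fun hcon => hab (add_right_cancel hcon).symm), Matrix.one_apply_ne hab]

include hξ in
lemma cq'_mul_cq (m j : ℕ) : cq' q ξ m j * cq q ξ m j = 1 :=
  mul_eq_one_comm.mp (cq_mul_cq' hξ m j)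

include hξ in
lemma extraction (X : Matrix (Fin q) (Fin q) ℂ) (hX : X ≠ 0) (c c' : ℂ)
    (E1 : dq q ξ * X = c • (X * dq q ξ)) (E2 : wq q * X = c' • (X * wq q)) :
    ∃ (m j : ℕ) (t : ℂ), m < q ∧ j < q ∧ t ≠ 0 ∧ X = t • cq q ξ m j := by
  have hξ0 : ξ ≠ 0 := hxi_ne_zero hξ
  have hξ1 : ξ ^ q = 1 := hξ.pow_eq_one
  have qpos : 0 < q := Nat.pos_of_ne_zero (NeZero.ne q)
  obtain ⟨a₀, b₀, h0⟩ : ∃ a b, X a b ≠ 0 := by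
    by_contra hc
    push_neg at hc
    exact hX (by ext a b; simpa using hc a b)
  have E1ab : ∀ a b : Fin q, ξ ^ (a : ℕ) * X a b = c * (X a b * ξ ^ (b : ℕ)) := by
    intro a b
    have h1 := congrFun (congrFun E1 a) b
    simpa [dq, Matrix.diagonal_mul, Matrix.mul_diagonal, Matrix.smul_apply, smul_eq_mul]
      using h1
  have hsupp : ∀ a b : Fin q, X a b ≠ 0 → ξ ^ (a : ℕ) = c * ξ ^ (b : ℕ) := by
    intro a b hab
    have h1 := E1ab a b
    rw [mul_comm (X a b) (ξ ^ (b : ℕ)), ← mul_assoc] at h1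
    exact mul_right_cancel₀ hab h1
  have support2 : ∀ a b : Fin q, X a b ≠ 0 → b = a + (b₀ - a₀) := by
    intro a b hab
    have k1 := hsupp a b hab
    have k2 := hsupp a₀ b₀ h0
    have k3 : ξ ^ ((a : ℕ) + (b₀ : ℕ)) = ξ ^ ((a₀ : ℕ) + (b : ℕ)) := by
      rw [pow_add, pow_add, k1, k2]
      ring
    have hmod : ((a : ℕ) + (b₀ : ℕ)) % q = ((a₀ : ℕ) + (b : ℕ)) % q := by
      refine hξ.pow_inj (Nat.mod_lt _ qpos) (Nat.mod_lt _ qpos) ?_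
      rw [pow_mod_q hξ1, pow_mod_q hξ1, k3]
    have hfin : a + b₀ = a₀ + b := by
      apply Fin.val_injective
      rw [Fin.val_add, Fin.val_add, hmod]
    linear_combination -hfin
  have E2ab : ∀ a b : Fin q, X (a - 1) b = c' * X a (b + 1) := by
    intro a b
    have h1 := congrFun (congrFun E2 a) b
    rw [wq_mul, Matrix.smul_apply, mul_wq, smul_eq_mul] at h1
    exact h1
  have rec1 : ∀ a b : Fin q, X a b = c' * X (a + 1) (b + 1) := by
    intro a b
    have h1 := E2ab (a + 1) b
    rwa [add_sub_cancel_right] at h1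
  have hc'0 : c' ≠ 0 := by
    intro hcc
    apply h0
    rw [rec1 a₀ b₀, hcc, zero_mul]
  have hγ0 : c'⁻¹ ≠ 0 := inv_ne_zero hc'0
  have rec2 : ∀ a b : Fin q, X (a + 1) (b + 1) = c'⁻¹ * X a b := by
    intro a b
    rw [rec1 a b]
    field_simp
  have chain : ∀ u : ℕ, X (a₀ + (u : Fin q)) (b₀ + (u : Fin q)) = c'⁻¹ ^ u * X a₀ b₀ := by
    intro u
    induction u with
    | zero => simp
    | succ v ih =>
      have hcast : ((v + 1 : ℕ) : Fin q) = ((v : ℕ) : Fin q) + 1 := by push_cast; ring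
      rw [hcast, ← add_assoc, ← add_assoc, rec2, ih, pow_succ]
      ring
  have hγq : c'⁻¹ ^ q = 1 := by
    have h1 := chain q
    rw [Fin.natCast_self, add_zero, add_zero] at h1
    have h2 : (1 : ℂ) * X a₀ b₀ = c'⁻¹ ^ q * X a₀ b₀ := by rw [one_mul]; exact h1
    exact (mul_right_cancel₀ h0 h2).symm
  obtain ⟨j, hjq, hjγ⟩ := hξ.eq_pow_of_pow_eq_one hγq
  set t : ℂ := X a₀ b₀ * (c'⁻¹ ^ (a₀ : ℕ))⁻¹ with ht
  have ht0 : t ≠ 0 := mul_ne_zero h0 (inv_ne_zero (pow_ne_zero _ hγ0))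
  have diag : ∀ a : Fin q, X a (a + (b₀ - a₀)) = t * c'⁻¹ ^ (a : ℕ) := by
    intro a
    have h1 := chain ((a - a₀) : Fin q).1
    rw [Fin.cast_val_eq_self (a - a₀)] at h1
    have e1 : a₀ + (a - a₀) = a := by ring
    have e2 : b₀ + (a - a₀) = a + (b₀ - a₀) := by ring
    rw [e1, e2] at h1
    have e3 : c'⁻¹ ^ (((a - a₀) : Fin q) : ℕ) * c'⁻¹ ^ ((a₀ : Fin q) : ℕ)
        = c'⁻¹ ^ ((a : Fin q) : ℕ) := by
      rw [← pow_add, ← pow_mod_q hγq ((((a - a₀) : Fin q) : ℕ) + ((a₀ : Fin q) : ℕ)),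
        ← Fin.val_add, sub_add_cancel]
    rw [h1, ht, ← e3]
    field_simp
  refine ⟨((b₀ - a₀ : Fin q) : ℕ), j, t, (b₀ - a₀ : Fin q).isLt, hjq, ht0, ?_⟩
  ext a b
  simp only [cq, Matrix.of_apply, Matrix.smul_apply, smul_eq_mul]
  rw [Fin.cast_val_eq_self (b₀ - a₀)]
  by_cases hb : b = a + (b₀ - a₀)
  · rw [if_pos hb, hb, diag a, pow_mul, hjγ]
  · rw [if_neg hb, mul_zero]
    by_contra hne
    exact hb (support2 a b hne)

end LocalBlock


lemma mk_eq_of_val_smul {n : ℕ} (A B : GL (Fin n) ℂ) (t : ℂ) (ht : t ≠ 0)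
    (h : (A : Matrix (Fin n) (Fin n) ℂ) = t • (B : Matrix (Fin n) (Fin n) ℂ)) :
    (QuotientGroup.mk A : PGLn n) = QuotientGroup.mk B := by
  have hAB : A = scalarGL n (Units.mk0 t ht) * B := by
    ext : 1
    show (A : Matrix (Fin n) (Fin n) ℂ) = (t • 1) * (B : Matrix (Fin n) (Fin n) ℂ)
    rw [h, Matrix.smul_mul, one_mul]
  rw [hAB, QuotientGroup.mk_mul,
    show (QuotientGroup.mk (scalarGL n (Units.mk0 t ht)) : PGLn n) = 1 from
      (QuotientGroup.eq_one_iff _).mpr (scalarGL_mem_center _ _), one_mul]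

section Rect

variable {ℓ n : ℕ} {r : Fin ℓ → ℕ}
  (e : ((i : Fin ℓ) × (Fin (r i) × Fin ((i : ℕ) + 1))) ≃ Fin n)

lemma emptyblock {j : Fin ℓ} (hj : r j = 0) (M N : Matrix (Fin (r j)) (Fin (r j)) ℂ) :
    M = N := by
  ext a b
  exact absurd a.isLt (by omega)

lemma rect_case (i₀ : Fin ℓ) (hri₀ : r i₀ ≠ 0) (hall : ∀ j, j ≠ i₀ → r j = 0) :
    ∃ s h : PGLn n, IsSemisimpleGammaLam ℓ r n e s ∧ IsSemisimpleGammaLam ℓ r n e h ∧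
      s * h = h * s ∧
      Set.Finite {g : PGLn n | g ∈ GammaLam ℓ r n e ∧ g * s = s * g ∧ g * h = h * g} := by
  classical
  haveI : NeZero (r i₀) := ⟨hri₀⟩
  set q := r i₀ with hq
  set ξ : ℂ := Complex.exp (2 * Real.pi * Complex.I / q) with hxi
  have hζ : IsPrimitiveRoot ξ q := Complex.isPrimitiveRoot_exp q hri₀
  have hξ0 : ξ ≠ 0 := hxi_ne_zero hζ
  -- tuples
  set dT : (i : Fin ℓ) → Matrix (Fin (r i)) (Fin (r i)) ℂ := fun i => dq (r i) ξ with hdT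
  set dT' : (i : Fin ℓ) → Matrix (Fin (r i)) (Fin (r i)) ℂ :=
    fun i => Matrix.diagonal fun a : Fin (r i) => (ξ ^ (a : ℕ))⁻¹ with hdT'
  set wT : (i : Fin ℓ) → Matrix (Fin (r i)) (Fin (r i)) ℂ :=
    fun i => if h : r i = 0 then 1 else @wq (r i) ⟨h⟩ with hwT
  set wT' : (i : Fin ℓ) → Matrix (Fin (r i)) (Fin (r i)) ℂ :=
    fun i => if h : r i = 0 then 1 else (@wq (r i) ⟨h⟩)ᵀ with hwT'
  set vT : (i : Fin ℓ) → Matrix (Fin (r i)) (Fin (r i)) ℂ := fun i => vq (r i) ξ with hvT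
  set vT' : (i : Fin ℓ) → Matrix (Fin (r i)) (Fin (r i)) ℂ := fun i => vq' (r i) ξ with hvT'
  have hne : ∀ i : Fin ℓ, r i ≠ 0 → i = i₀ := by
    intro i hi
    by_contra hcon
    exact hi (hall i hcon)
  -- units in the product ring
  have hdd : dT * dT' = 1 ∧ dT' * dT = 1 := by
    constructor
    · funext i
      show Matrix.diagonal (fun a : Fin (r i) => ξ ^ (a : ℕ))
        * Matrix.diagonal (fun a : Fin (r i) => (ξ ^ (a : ℕ))⁻¹) = 1
      rw [Matrix.diagonal_mul_diagonal]
      have hfun : (fun a : Fin (r i) => ξ ^ (a : ℕ) * (ξ ^ (a : ℕ))⁻¹) = fun _ => (1 : ℂ) := by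
        funext a
        exact mul_inv_cancel₀ (pow_ne_zero _ hξ0)
      rw [hfun, Matrix.diagonal_one]
    · funext i
      show Matrix.diagonal (fun a : Fin (r i) => (ξ ^ (a : ℕ))⁻¹)
        * Matrix.diagonal (fun a : Fin (r i) => ξ ^ (a : ℕ)) = 1
      rw [Matrix.diagonal_mul_diagonal]
      have hfun : (fun a : Fin (r i) => (ξ ^ (a : ℕ))⁻¹ * ξ ^ (a : ℕ)) = fun _ => (1 : ℂ) := by
        funext a
        exact inv_mul_cancel₀ (pow_ne_zero _ hξ0)
      rw [hfun, Matrix.diagonal_one]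
  have hww : wT * wT' = 1 ∧ wT' * wT = 1 := by
    have h1 : ∀ i, wT i * wT' i = 1 := by
      intro i
      by_cases hi : r i = 0
      · exact emptyblock hi _ _
      · show (if h : r i = 0 then 1 else @wq (r i) ⟨h⟩) *
          (if h : r i = 0 then 1 else (@wq (r i) ⟨h⟩)ᵀ) = 1
        rw [dif_neg hi, dif_neg hi]
        exact @wq_mul_wq_transpose (r i) ⟨hi⟩
    constructor
    · funext i; exact h1 i
    · funext i
      exact mul_eq_one_comm.mp (h1 i)
  have hvv : vT * vT' = 1 ∧ vT' * vT = 1 := by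
    have h1 : ∀ i, vT i * vT' i = 1 := by
      intro i
      by_cases hi : r i = 0
      · exact emptyblock hi _ _
      · have hii := hne i hi
        subst hii
        exact @vq_mul_vq' q ⟨hri₀⟩ ξ hζ
    constructor
    · funext i; exact h1 i
    · funext i
      exact mul_eq_one_comm.mp (h1 i)
  set DU : ((i : Fin ℓ) → Matrix (Fin (r i)) (Fin (r i)) ℂ)ˣ := ⟨dT, dT', hdd.1, hdd.2⟩
  set WU : ((i : Fin ℓ) → Matrix (Fin (r i)) (Fin (r i)) ℂ)ˣ := ⟨wT, wT', hww.1, hww.2⟩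
  set VU : ((i : Fin ℓ) → Matrix (Fin (r i)) (Fin (r i)) ℂ)ˣ := ⟨vT, vT', hvv.1, hvv.2⟩
  set SA : GL (Fin n) ℂ := Units.map (F1 r e).toMonoidHom DU with hSA
  set WA : GL (Fin n) ℂ := Units.map (F1 r e).toMonoidHom WU with hWA
  set VA : GL (Fin n) ℂ := Units.map (F1 r e).toMonoidHom VU with hVA
  have hSAval : (SA : Matrix (Fin n) (Fin n) ℂ) = F1 r e dT := rfl
  have hWAval : (WA : Matrix (Fin n) (Fin n) ℂ) = F1 r e wT := rfl
  refine ⟨QuotientGroup.mk SA, QuotientGroup.mk WA, ?_, ?_, ?_, ?_⟩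
  · -- s semisimple
    refine ⟨SA, hSAval ▸ hlam_mem e dT, ⟨1, ?_⟩, rfl⟩
    rw [one_mul, inv_one, mul_one]
    rw [hSAval]
    exact F1_isDiag e dT fun i => Matrix.isDiag_diagonal _
  · -- h semisimple
    refine ⟨WA, hWAval ▸ hlam_mem e wT, ⟨VA, ?_⟩, rfl⟩
    have : ((VA * WA * VA⁻¹ : GL (Fin n) ℂ) : Matrix (Fin n) (Fin n) ℂ)
        = F1 r e (vT * wT * vT') := by
      rw [Units.val_mul, Units.val_mul]
      have hinv : ((VA⁻¹ : GL (Fin n) ℂ) : Matrix (Fin n) (Fin n) ℂ) = F1 r e vT' := by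
        rw [hVA, ← map_inv]
        rfl
      rw [hinv, hVA]
      show F1 r e vT * F1 r e wT * F1 r e vT' = _
      rw [← map_mul (F1 r e), ← map_mul (F1 r e)]
    rw [this]
    refine F1_isDiag e _ fun i => ?_
    show (vT i * wT i * vT' i).IsDiag
    by_cases hi : r i = 0
    · rw [emptyblock hi (vT i * wT i * vT' i) 1]
      exact Matrix.isDiag_one
    · have hii := hne i hi
      subst hii
      have hwTi : wT i = @wq (r i) ⟨hi⟩ := by
        show (if h : r i = 0 then 1 else @wq (r i) ⟨h⟩) = _
        rw [dif_neg hi]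
      rw [hwTi]
      show (vq (r i) ξ * @wq (r i) ⟨hi⟩ * vq' (r i) ξ).IsDiag
      rw [@vq_mul_wq (r i) ⟨hi⟩ ξ hζ, mul_assoc, @vq_mul_vq' (r i) ⟨hi⟩ ξ hζ, mul_one]
      exact Matrix.isDiag_diagonal _
  · -- commute
    refine mk_mul_comm_of_scalar SA WA (Units.mk0 ξ hξ0) ?_
    rw [hSAval, hWAval, ← map_mul (F1 r e), ← map_mul (F1 r e)]
    show F1 r e (dT * wT) = ξ • F1 r e (wT * dT)
    rw [← F1_smul]
    congr 1
    funext i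
    show dT i * wT i = ξ • (wT i * dT i)
    by_cases hi : r i = 0
    · exact emptyblock hi _ _
    · have hii := hne i hi
      subst hii
      have hwTi : wT i = @wq (r i) ⟨hi⟩ := by
        show (if h : r i = 0 then 1 else @wq (r i) ⟨h⟩) = _
        rw [dif_neg hi]
      rw [hwTi]
      exact @dq_mul_wq (r i) ⟨hi⟩ ξ hζ
  · -- finiteness
    set cTup : ℕ → ℕ → ((i : Fin ℓ) → Matrix (Fin (r i)) (Fin (r i)) ℂ) :=
      fun m j i => if h : r i = 0 then 1 else @cq (r i) ⟨h⟩ ξ m j with hcTup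
    have hCC : ∀ mj : Fin q × Fin q, ∃ CUu : GL (Fin n) ℂ,
        (CUu : Matrix (Fin n) (Fin n) ℂ) = F1 r e (cTup (mj.1 : ℕ) (mj.2 : ℕ)) := by
      intro mj
      set m := (mj.1 : ℕ)
      set j := (mj.2 : ℕ)
      set cT' : (i : Fin ℓ) → Matrix (Fin (r i)) (Fin (r i)) ℂ :=
        fun i => if h : r i = 0 then 1 else @cq' (r i) ⟨h⟩ ξ m j with hcT'
      have h1 : ∀ i, cTup m j i * cT' i = 1 := by
        intro i
        by_cases hi : r i = 0
        · exact emptyblock hi _ _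
        · have hii := hne i hi
          subst hii
          show (if h : r i = 0 then 1 else @cq (r i) ⟨h⟩ ξ m j)
            * (if h : r i = 0 then 1 else @cq' (r i) ⟨h⟩ ξ m j) = 1
          rw [dif_neg hi, dif_neg hi]
          exact @cq_mul_cq' (r i) ⟨hi⟩ ξ hζ m j
      have h2 : ∀ i, cT' i * cTup m j i = 1 := fun i => mul_eq_one_comm.mp (h1 i)
      exact ⟨Units.map (F1 r e).toMonoidHom
        ⟨cTup m j, cT', funext h1, funext h2⟩, rfl⟩
    choose CUF hCUF using hCC
    apply Set.Finite.subset (Set.finite_range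
      (fun mj : Fin q × Fin q => (QuotientGroup.mk (CUF mj) : PGLn n)))
    rintro g ⟨⟨A, hAH, rfl⟩, hgs, hgh⟩
    obtain ⟨x, hx⟩ := hAH
    have hx' : F1 r e x = (A : Matrix (Fin n) (Fin n) ℂ) := hx
    obtain ⟨c, hc⟩ := exists_scalar_of_mk_comm A SA hgs
    obtain ⟨c', hc'⟩ := exists_scalar_of_mk_comm A WA hgh
    rw [hSAval, ← hx', ← map_mul (F1 r e), ← map_mul (F1 r e), ← F1_smul] at hc
    rw [hWAval, ← hx', ← map_mul (F1 r e), ← map_mul (F1 r e), ← F1_smul] at hc'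
    have hcx := F1_inj e hc
    have hcx' := F1_inj e hc'
    have E1' : dq q ξ * x i₀ = c • (x i₀ * dq q ξ) := congrFun hcx i₀
    have E2' : @wq q ⟨hri₀⟩ * x i₀ = c' • (x i₀ * @wq q ⟨hri₀⟩) := by
      have e2 : wT i₀ * x i₀ = c' • (x i₀ * wT i₀) := congrFun hcx' i₀
      have hwTi₀ : wT i₀ = @wq q ⟨hri₀⟩ := by
        show (if h : r i₀ = 0 then 1 else @wq (r i₀) ⟨h⟩) = _
        rw [dif_neg hri₀]
      rwa [hwTi₀] at e2
    have hX0 : x i₀ ≠ 0 := block_ne_zero e A x hx' i₀ hri₀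
    obtain ⟨m, j, t, hm, hj, ht, hXeq⟩ :=
      extraction hζ (x i₀) hX0 c c' E1' E2'
    refine ⟨(⟨m, hm⟩, ⟨j, hj⟩), ?_⟩
    have hval : (A : Matrix (Fin n) (Fin n) ℂ)
        = t • ((CUF (⟨m, hm⟩, ⟨j, hj⟩) : GL (Fin n) ℂ) : Matrix (Fin n) (Fin n) ℂ) := by
      rw [hCUF, ← hx', ← F1_smul]
      congr 1
      funext i
      by_cases hi : r i = 0
      · exact emptyblock hi _ _
      · have hii := hne i hi
        subst hii
        show x i = t • (if h : r i = 0 then 1 else @cq (r i) ⟨h⟩ ξ m j)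
        rw [dif_neg hi]
        exact hXeq
    exact (mk_eq_of_val_smul A _ t ht hval).symm

end Rect


open Kronecker in
/-- Let `n ≥ 1` and let `λ` be a partition of `n` with part `i` occurring
`r_i` times.  Then `Γ(λ) ⊆ PGL_n(ℂ)` contains a pair `(s,h)` of commuting semisimple
elements with finite simultaneous centralizer `{g ∈ Γ(λ) : gs = sg and gh = hg}` iff exactly
one `r_i` is nonzero, i.e. `λ` is rectangular.  Moreover, when `λ = (k, …, k)` with `ρ`
parts (so `N = kρ`), the group `Γ(λ)` is isomorphic to `PGL_ρ(ℂ)`. -/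
theorem stmt8 (ℓ n : ℕ) (hn1 : 1 ≤ n) (r : Fin ℓ → ℕ)
    (hn : ∑ i : Fin ℓ, ((i : ℕ) + 1) * r i = n)
    (e : ((i : Fin ℓ) × (Fin (r i) × Fin ((i : ℕ) + 1))) ≃ Fin n) :
    ((∃ s h : PGLn n,
        IsSemisimpleGammaLam ℓ r n e s ∧ IsSemisimpleGammaLam ℓ r n e h ∧
        s * h = h * s ∧
        Set.Finite {g : PGLn n | g ∈ GammaLam ℓ r n e ∧ g * s = s * g ∧ g * h = h * g})
      ↔ ∃! i : Fin ℓ, r i ≠ 0)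
    ∧ (∀ (k ρ N : ℕ), 1 ≤ k → 1 ≤ ρ → N = k * ρ →
        ∀ e' : (Fin ρ × Fin k) ≃ Fin N,
          Nonempty (↥(Subgroup.closure {p : PGLn N | ∃ A : GL (Fin N) ℂ,
              ((A : Matrix (Fin N) (Fin N) ℂ) ∈ Set.range
                fun x : Matrix (Fin ρ) (Fin ρ) ℂ =>
                  Matrix.reindex e' e' (x ⊗ₖ (1 : Matrix (Fin k) (Fin k) ℂ))) ∧
              QuotientGroup.mk A = p}) ≃* PGLn ρ)) := by
  constructor
  · constructor
    · rintro ⟨s, h, hs, hh, hcomm, hfin⟩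
      have hex : ∃ i, r i ≠ 0 := by
        by_contra hc
        push_neg at hc
        have hzero : ∑ i : Fin ℓ, ((i : ℕ) + 1) * r i = 0 :=
          Finset.sum_eq_zero fun i _ => by rw [hc i, mul_zero]
        omega
      obtain ⟨i₀, hi₀⟩ := hex
      refine ⟨i₀, hi₀, ?_⟩
      intro i₁ hi₁
      by_contra hne
      have hsG : s ∈ GammaLam ℓ r n e := by
        obtain ⟨A, hA, _, hmk⟩ := hs
        exact ⟨A, hA, hmk⟩
      have hhG : h ∈ GammaLam ℓ r n e := by
        obtain ⟨A, hA, _, hmk⟩ := hh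
        exact ⟨A, hA, hmk⟩
      exact (centralizer_infinite e i₁ i₀ hne hi₁ hi₀ s h hsG hhG) hfin
    · rintro ⟨i₀, hi₀, huniq⟩
      refine rect_case e i₀ hi₀ fun j hj => ?_
      by_contra hcon
      exact hj (huniq j hcon)
  · intro k ρ N hk hρ hN e'
    exact part2final k ρ N hk hρ hN e'
end PartOne
end

section
/- Let n ≥ 1 and let λ be a partition of n with part i occurring r_i times. Then Γ_{SL}(λ) contains a pair (s,h) of commuting semisimple elements whose simultaneous centralizer {g ∈ Γ_{SL}(λ) : gs = sg and gh = hg} is finite if and only if λ = (n), i.e. λ has a single part equal to n. In that case Γ_{SL}((n)) = {z ∈ ℂ^× : z^n = 1} is the finite group of n-th roots of unity, and every pair of its elements has finite simultaneous centralizer. -/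
/-- The homomorphism `(x_1, …, x_ℓ) ↦ ∏_i det(x_i)^i` on `∏_i GL_{r_i}(ℂ)`, where the index
`i : Fin ℓ` stands for the part `i+1`. -/
noncomputable def detProdHom (ℓ : ℕ) (r : Fin ℓ → ℕ) :
    ((i : Fin ℓ) → GL (Fin (r i)) ℂ) →* ℂˣ :=
  ∏ i : Fin ℓ, ((powMonoidHom ((i : ℕ) + 1)).comp
    ((Matrix.GeneralLinearGroup.det).comp (Pi.evalMonoidHom (fun i => GL (Fin (r i)) ℂ) i)))

/-- `Γ_SL(λ) = {(x_1, …, x_ℓ) ∈ ∏_i GL_{r_i}(ℂ) : ∏_i det(x_i)^i = 1}`, the reductive part of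
the centralizer in `SL_n(ℂ)` of a unipotent element of Jordan type `λ`. -/
noncomputable def GammaSL (ℓ : ℕ) (r : Fin ℓ → ℕ) :
    Subgroup ((i : Fin ℓ) → GL (Fin (r i)) ℂ) :=
  (detProdHom ℓ r).ker

noncomputable def sclGL (k : ℕ) : ℂˣ →* GL (Fin k) ℂ :=
  Units.map (Matrix.scalar (Fin k)).toMonoidHom

lemma sclGL_val (k : ℕ) (c : ℂˣ) :
    (sclGL k c : Matrix (Fin k) (Fin k) ℂ) = Matrix.scalar (Fin k) (c : ℂ) := rfl

lemma det_sclGL (k : ℕ) (c : ℂˣ) : Matrix.GeneralLinearGroup.det (sclGL k c) = c ^ k := by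
  apply Units.ext
  rw [Units.val_pow_eq_pow_val, Matrix.GeneralLinearGroup.val_det_apply, sclGL_val,
    Matrix.scalar_apply, Matrix.det_diagonal, Finset.prod_const, Finset.card_univ,
    Fintype.card_fin]

lemma sclGL_comm (k : ℕ) (c : ℂˣ) (x : GL (Fin k) ℂ) : sclGL k c * x = x * sclGL k c := by
  apply Units.ext
  rw [Units.val_mul, Units.val_mul, sclGL_val]
  exact Matrix.scalar_commute (c : ℂ) (fun r => Commute.all _ r) _

lemma detProdHom_apply (ℓ : ℕ) (r : Fin ℓ → ℕ) (g : (i : Fin ℓ) → GL (Fin (r i)) ℂ) :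
    detProdHom ℓ r g = ∏ i : Fin ℓ, (Matrix.GeneralLinearGroup.det (g i)) ^ ((i : ℕ) + 1) := by
  rw [detProdHom, MonoidHom.finset_prod_apply]
  rfl

lemma detProdHom_mulSingle (ℓ : ℕ) (r : Fin ℓ → ℕ) (i : Fin ℓ) (x : GL (Fin (r i)) ℂ) :
    detProdHom ℓ r (Pi.mulSingle i x) = (Matrix.GeneralLinearGroup.det x) ^ ((i : ℕ) + 1) := by
  rw [detProdHom_apply]
  rw [Finset.prod_eq_single i (fun j _ hj => by rw [Pi.mulSingle_eq_of_ne hj, map_one, one_pow])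
    (fun hi => absurd (Finset.mem_univ i) hi)]
  rw [Pi.mulSingle_eq_same]


set_option maxHeartbeats 1000000 in
lemma mulSingle_scl_comm (ℓ : ℕ) (r : Fin ℓ → ℕ) (q : Fin ℓ) (c : ℂˣ)
    (x : (k : Fin ℓ) → GL (Fin (r k)) ℂ) :
    Pi.mulSingle q (sclGL (r q) c) * x = x * Pi.mulSingle q (sclGL (r q) c) := by
  funext k
  show (Pi.mulSingle q (sclGL (r q) c) : (k : Fin ℓ) → GL (Fin (r k)) ℂ) k * x k =
    x k * (Pi.mulSingle q (sclGL (r q) c) : (k : Fin ℓ) → GL (Fin (r k)) ℂ) k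
  rcases eq_or_ne k q with rfl | hkq
  · rw [Pi.mulSingle_eq_same, sclGL_comm]
  · rw [Pi.mulSingle_eq_of_ne hkq, one_mul, mul_one]

set_option maxHeartbeats 1000000 in
lemma centralizer_infinite_two (ℓ : ℕ) (r : Fin ℓ → ℕ) {i j : Fin ℓ} (hij : i ≠ j)
    (hri : r i ≠ 0) (hrj : r j ≠ 0) (s h : (k : Fin ℓ) → GL (Fin (r k)) ℂ) :
    Set.Infinite {g : (k : Fin ℓ) → GL (Fin (r k)) ℂ |
      g ∈ GammaSL ℓ r ∧ g * s = s * g ∧ g * h = h * g} := by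
  set u : ℂˣ := Units.mk0 (2 : ℂ) two_ne_zero with hu
  set a : ℕ := ((i : ℕ) + 1) * r i with ha
  set b : ℕ := ((j : ℕ) + 1) * r j with hb
  let A : ℕ → ((k : Fin ℓ) → GL (Fin (r k)) ℂ) := fun m =>
    Pi.mulSingle i (sclGL (r i) (u ^ (m * b)))
  let B : ℕ → ((k : Fin ℓ) → GL (Fin (r k)) ℂ) := fun m =>
    Pi.mulSingle j (sclGL (r j) ((u ^ (m * a))⁻¹))
  let f : ℕ → ((k : Fin ℓ) → GL (Fin (r k)) ℂ) := fun m => A m * B m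
  have hcomm : ∀ (m : ℕ) (x : (k : Fin ℓ) → GL (Fin (r k)) ℂ), f m * x = x * f m := by
    intro m x
    have h1 : Commute (A m) x := mulSingle_scl_comm ℓ r i _ x
    have h2 : Commute (B m) x := mulSingle_scl_comm ℓ r j _ x
    exact (h1.mul_left h2)
  have hmem : ∀ m : ℕ, f m ∈ {g : (k : Fin ℓ) → GL (Fin (r k)) ℂ |
      g ∈ GammaSL ℓ r ∧ g * s = s * g ∧ g * h = h * g} := by
    intro m
    refine ⟨?_, hcomm m s, hcomm m h⟩
    show f m ∈ (detProdHom ℓ r).ker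
    rw [MonoidHom.mem_ker]
    show detProdHom ℓ r (A m * B m) = 1
    rw [map_mul]
    show detProdHom ℓ r (Pi.mulSingle i (sclGL (r i) (u ^ (m * b)))) *
      detProdHom ℓ r (Pi.mulSingle j (sclGL (r j) ((u ^ (m * a))⁻¹))) = 1
    rw [detProdHom_mulSingle, detProdHom_mulSingle, det_sclGL, det_sclGL,
      inv_pow, inv_pow, ← pow_mul, ← pow_mul, ← pow_mul, ← pow_mul, mul_inv_eq_one]
    congr 1
    rw [ha, hb]; ring
  have hinj : Function.Injective f := by
    intro m m' hmm
    have h1 : A m i * B m i = A m' i * B m' i := congrFun hmm i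
    have hBi : ∀ m'', B m'' i = 1 := fun m'' => Pi.mulSingle_eq_of_ne hij _
    rw [hBi m, hBi m', mul_one, mul_one] at h1
    have h1' : sclGL (r i) (u ^ (m * b)) = sclGL (r i) (u ^ (m' * b)) := by
      have hAi : ∀ m'', A m'' i = sclGL (r i) (u ^ (m'' * b)) :=
        fun m'' => Pi.mulSingle_eq_same _ _
      rw [hAi m, hAi m'] at h1
      exact h1
    have h2 : (Matrix.scalar (Fin (r i)) ((u : ℂ) ^ (m * b))) =
        (Matrix.scalar (Fin (r i)) ((u : ℂ) ^ (m' * b))) := by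
      have := congrArg Units.val h1'
      rw [sclGL_val, sclGL_val, Units.val_pow_eq_pow_val, Units.val_pow_eq_pow_val] at this
      exact this
    haveI : Nonempty (Fin (r i)) := ⟨⟨0, Nat.pos_of_ne_zero hri⟩⟩
    have h3 : (2 : ℂ) ^ (m * b) = (2 : ℂ) ^ (m' * b) := Matrix.scalar_inj.mp h2
    have h4 : ((2 ^ (m * b) : ℕ) : ℂ) = ((2 ^ (m' * b) : ℕ) : ℂ) := by push_cast; exact h3
    have h5 : (2 : ℕ) ^ (m * b) = 2 ^ (m' * b) := Nat.cast_injective h4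
    have h6 : m * b = m' * b := Nat.pow_right_injective (le_refl 2) h5
    have hbne : b ≠ 0 := by
      rw [hb]; exact Nat.mul_ne_zero (Nat.succ_ne_zero _) hrj
    exact Nat.eq_of_mul_eq_mul_right (Nat.pos_of_ne_zero hbne) h6
  exact Set.infinite_of_injective_forall_mem hinj hmem

open Polynomial in
lemma one_add_smul_indep {k : ℕ} [Nonempty (Fin k)] {x : Matrix (Fin k) (Fin k) ℂ}
    (hx : ∀ c : ℂ, x ≠ c • 1) {z z' w w' : ℂ}
    (hzz : z • (1 : Matrix (Fin k) (Fin k) ℂ) + w • x =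
      z' • (1 : Matrix (Fin k) (Fin k) ℂ) + w' • x) : z = z' ∧ w = w' := by
  have h1 : (1 : Matrix (Fin k) (Fin k) ℂ) ≠ 0 := by
    intro h0
    have := congrFun (congrFun h0 (Classical.arbitrary _)) (Classical.arbitrary _)
    simp [Matrix.one_apply] at this
  have hw : w = w' := by
    by_contra hww
    apply hx ((w - w')⁻¹ * (z' - z))
    have h2 : (w - w') • x = (z' - z) • (1 : Matrix (Fin k) (Fin k) ℂ) := by
      rw [sub_smul, sub_smul, sub_eq_sub_iff_add_eq_add, add_comm]
      exact hzz
    rw [show x = (w - w')⁻¹ • ((w - w') • x) by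
        rw [smul_smul, inv_mul_cancel₀ (sub_ne_zero.mpr hww), one_smul],
      h2, smul_smul]
  subst hw
  refine ⟨?_, rfl⟩
  have h3 : z • (1 : Matrix (Fin k) (Fin k) ℂ) = z' • 1 := by
    exact add_right_cancel hzz
  exact smul_left_injective ℂ h1 h3

set_option maxHeartbeats 1600000 in
open Polynomial in
lemma centralizer_infinite_one (ℓ : ℕ) (r : Fin ℓ → ℕ) {i : Fin ℓ} (hri : 2 ≤ r i)
    (s h : (k : Fin ℓ) → GL (Fin (r k)) ℂ) (hcomm : s * h = h * s) :
    Set.Infinite {g : (k : Fin ℓ) → GL (Fin (r k)) ℂ |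
      g ∈ GammaSL ℓ r ∧ g * s = s * g ∧ g * h = h * g} := by
  haveI hne : Nonempty (Fin (r i)) := ⟨⟨0, by omega⟩⟩
  set sv : Matrix (Fin (r i)) (Fin (r i)) ℂ := (s i : Matrix (Fin (r i)) (Fin (r i)) ℂ) with hsv
  set hv : Matrix (Fin (r i)) (Fin (r i)) ℂ := (h i : Matrix (Fin (r i)) (Fin (r i)) ℂ) with hhv
  have hsh : sv * hv = hv * sv := by
    have h1 : s i * h i = h i * s i := congrFun hcomm i
    exact congrArg Units.val h1
  -- find a non-scalar matrix commuting with both sv and hv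
  obtain ⟨x, hxs, hxh, hxns⟩ :
      ∃ x : Matrix (Fin (r i)) (Fin (r i)) ℂ,
        x * sv = sv * x ∧ x * hv = hv * x ∧ ∀ c : ℂ, x ≠ c • 1 := by
    by_cases hs : ∃ c : ℂ, sv = c • 1
    · by_cases hh' : ∃ c : ℂ, hv = c • 1
      · obtain ⟨c, hc⟩ := hs; obtain ⟨d, hd⟩ := hh'
        have h01 : (⟨0, by omega⟩ : Fin (r i)) ≠ ⟨1, by omega⟩ :=
          Fin.ne_of_val_ne (by norm_num)
        refine ⟨Matrix.single ⟨0, by omega⟩ ⟨1, by omega⟩ 1, ?_, ?_, ?_⟩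
        · rw [hc, mul_smul_comm, smul_mul_assoc, mul_one, one_mul]
        · rw [hd, mul_smul_comm, smul_mul_assoc, mul_one, one_mul]
        · intro c hcc
          have := congrFun (congrFun hcc ⟨0, by omega⟩) ⟨1, by omega⟩
          rw [Matrix.single_apply_same, Matrix.smul_apply,
            Matrix.one_apply_ne h01, smul_zero] at this
          exact one_ne_zero this
      · push_neg at hh'
        obtain ⟨c, hc⟩ := hs
        exact ⟨hv, by rw [hc, mul_smul_comm, smul_mul_assoc, mul_one, one_mul], rfl, hh'⟩
    · push_neg at hs
      exact ⟨sv, rfl, hsh, hs⟩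
  -- polynomial det(1 + t x) has finitely many roots
  set q : ℂ[X] := Matrix.det (1 + (X : ℂ[X]) • (x.map C)) with hq
  have heval : ∀ t : ℂ, Polynomial.eval t q =
      Matrix.det (1 + t • x) := by
    intro t
    have h1 := RingHom.map_det (evalRingHom t) (1 + (X : ℂ[X]) • (x.map C))
    rw [RingHom.mapMatrix_apply] at h1
    have h2 : (1 + (X : ℂ[X]) • (x.map C)).map (evalRingHom t) = 1 + t • x := by
      ext a b
      simp [Matrix.map_apply, Matrix.add_apply, Matrix.smul_apply, Matrix.one_apply,
        apply_ite (eval t), smul_eq_mul]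
      try ring
    rw [h2] at h1
    exact h1
  have hq0 : q ≠ 0 := by
    intro h0
    have h1 := heval 0
    rw [h0] at h1
    simp only [eval_zero, zero_smul, add_zero, Matrix.det_one] at h1
    exact zero_ne_one h1
  have hSfin : {t : ℂ | Matrix.det (1 + t • x) = 0}.Finite := by
    refine (Polynomial.finite_setOf_isRoot hq0).subset ?_
    intro t ht
    show Polynomial.IsRoot q t
    rw [Polynomial.IsRoot, heval]
    exact ht
  have hSinf : Set.Infinite {t : ℂ | Matrix.det (1 + t • x) ≠ 0} := by
    have h1 := hSfin.infinite_compl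
    rwa [Set.compl_setOf] at h1
  haveI : Infinite ↥{t : ℂ | Matrix.det (1 + t • x) ≠ 0} := hSinf.to_subtype
  -- construct the centralizer elements
  have key : ∀ t : ↥{t : ℂ | Matrix.det (1 + t • x) ≠ 0},
      ∃ (z : ℂ) (g : (k : Fin ℓ) → GL (Fin (r k)) ℂ), z ≠ 0 ∧
        (g ∈ GammaSL ℓ r ∧ g * s = s * g ∧ g * h = h * g) ∧
        (g i : Matrix (Fin (r i)) (Fin (r i)) ℂ) = z • 1 + (z * (t : ℂ)) • x := by
    rintro ⟨t, ht⟩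
    have ht' : Matrix.det (1 + t • x) ≠ 0 := ht
    set dt : ℂ := Matrix.det (1 + t • x) with hdt
    obtain ⟨z, hz⟩ := IsAlgClosed.exists_pow_nat_eq ((dt ^ ((i : ℕ) + 1))⁻¹)
      (n := r i * ((i : ℕ) + 1)) (by positivity)
    have hz0 : z ≠ 0 := by
      intro h0
      rw [h0, zero_pow (by positivity)] at hz
      exact (inv_ne_zero (pow_ne_zero _ ht')) hz.symm
    set A : Matrix (Fin (r i)) (Fin (r i)) ℂ := z • (1 + t • x) with hA
    have hdetA : A.det = z ^ (r i) * dt := by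
      rw [hA, Matrix.det_smul, Fintype.card_fin]
    have hAunit : IsUnit A := by
      rw [Matrix.isUnit_iff_isUnit_det, hdetA, isUnit_iff_ne_zero]
      exact mul_ne_zero (pow_ne_zero _ hz0) ht'
    set G : GL (Fin (r i)) ℂ := hAunit.unit with hG
    have hGval : (G : Matrix (Fin (r i)) (Fin (r i)) ℂ) = A := hAunit.unit_spec
    have hAexp : A = z • 1 + (z * t) • x := by
      rw [hA, smul_add, smul_smul]
    refine ⟨z, Pi.mulSingle i G, hz0, ⟨?_, ?_, ?_⟩, ?_⟩
    · show Pi.mulSingle i G ∈ (detProdHom ℓ r).ker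
      rw [MonoidHom.mem_ker, detProdHom_mulSingle]
      apply Units.ext
      rw [Units.val_pow_eq_pow_val, Matrix.GeneralLinearGroup.val_det_apply, Units.val_one]
      show A.det ^ ((i : ℕ) + 1) = 1
      rw [hdetA, mul_pow, ← pow_mul, hz, inv_mul_cancel₀ (pow_ne_zero _ ht')]
    · funext k
      show (Pi.mulSingle i G : (k : Fin ℓ) → GL (Fin (r k)) ℂ) k * s k =
        s k * (Pi.mulSingle i G : (k : Fin ℓ) → GL (Fin (r k)) ℂ) k
      rcases eq_or_ne k i with rfl | hki
      · rw [Pi.mulSingle_eq_same]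
        apply Units.ext
        rw [Units.val_mul, Units.val_mul, hGval, hAexp]
        rw [add_mul, mul_add, smul_mul_assoc, smul_mul_assoc, mul_smul_comm, mul_smul_comm,
          one_mul, mul_one, hxs]
      · rw [Pi.mulSingle_eq_of_ne hki, one_mul, mul_one]
    · funext k
      show (Pi.mulSingle i G : (k : Fin ℓ) → GL (Fin (r k)) ℂ) k * h k =
        h k * (Pi.mulSingle i G : (k : Fin ℓ) → GL (Fin (r k)) ℂ) k
      rcases eq_or_ne k i with rfl | hki
      · rw [Pi.mulSingle_eq_same]
        apply Units.ext
        rw [Units.val_mul, Units.val_mul, hGval, hAexp]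
        rw [add_mul, mul_add, smul_mul_assoc, smul_mul_assoc, mul_smul_comm, mul_smul_comm,
          one_mul, mul_one, hxh]
      · rw [Pi.mulSingle_eq_of_ne hki, one_mul, mul_one]
    · show ((Pi.mulSingle i G : (k : Fin ℓ) → GL (Fin (r k)) ℂ) i :
          Matrix (Fin (r i)) (Fin (r i)) ℂ) = z • 1 + (z * t) • x
      rw [Pi.mulSingle_eq_same, hGval, hAexp]
  choose z g hz0 hmem hval using key
  have hinj : Function.Injective g := by
    intro t t' htt
    have h1 := congrArg (fun w => ((w i : GL (Fin (r i)) ℂ) :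
      Matrix (Fin (r i)) (Fin (r i)) ℂ)) htt
    rw [hval t, hval t'] at h1
    obtain ⟨he1, he2⟩ := one_add_smul_indep hxns h1
    apply Subtype.ext
    rw [← he1] at he2
    exact mul_left_cancel₀ (hz0 t) he2
  exact Set.infinite_of_injective_forall_mem hinj hmem

set_option maxHeartbeats 1600000 in
lemma part2aux (ℓ n : ℕ) (r : Fin ℓ → ℕ) (i : Fin ℓ) (hin : (i : ℕ) + 1 = n)
    (hri : r i = 1) (hz : ∀ j : Fin ℓ, j ≠ i → r j = 0) :
    Finite ↥(GammaSL ℓ r) ∧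
      Nonempty (↥(GammaSL ℓ r) ≃* ↥(rootsOfUnity n ℂ)) ∧
      ∀ s h : (k : Fin ℓ) → GL (Fin (r k)) ℂ, s ∈ GammaSL ℓ r → h ∈ GammaSL ℓ r →
        Set.Finite {g : (k : Fin ℓ) → GL (Fin (r k)) ℂ |
          g ∈ GammaSL ℓ r ∧ g * s = s * g ∧ g * h = h * g} := by
  haveI hU : Unique (Fin (r i)) := by rw [hri]; infer_instance
  have hsub : ∀ j : Fin ℓ, j ≠ i → Subsingleton (GL (Fin (r j)) ℂ) := by
    intro j hj
    haveI : IsEmpty (Fin (r j)) := by rw [hz j hj]; infer_instance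
    constructor
    intro p q
    apply Units.ext
    funext a b
    exact isEmptyElim a
  have hdet1 : ∀ (g : (k : Fin ℓ) → GL (Fin (r k)) ℂ) (j : Fin ℓ), j ≠ i →
      Matrix.GeneralLinearGroup.det (g j) = 1 := by
    intro g j hj
    haveI := hsub j hj
    rw [Subsingleton.elim (g j) 1, map_one]
  have hmemiff : ∀ g : (k : Fin ℓ) → GL (Fin (r k)) ℂ,
      g ∈ GammaSL ℓ r ↔ (Matrix.GeneralLinearGroup.det (g i)) ^ n = 1 := by
    intro g
    show g ∈ (detProdHom ℓ r).ker ↔ _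
    rw [MonoidHom.mem_ker, detProdHom_apply,
      Finset.prod_eq_single i (fun j _ hj => by rw [hdet1 g j hj, one_pow])
        (fun hi => absurd (Finset.mem_univ i) hi), hin]
  let d : ((k : Fin ℓ) → GL (Fin (r k)) ℂ) →* ℂˣ :=
    (Matrix.GeneralLinearGroup.det).comp (Pi.evalMonoidHom (fun k => GL (Fin (r k)) ℂ) i)
  have hd : ∀ g : (k : Fin ℓ) → GL (Fin (r k)) ℂ,
      d g = Matrix.GeneralLinearGroup.det (g i) := fun g => rfl
  let φ : ↥(GammaSL ℓ r) →* ↥(rootsOfUnity n ℂ) :=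
    MonoidHom.codRestrict (d.comp (GammaSL ℓ r).subtype) (rootsOfUnity n ℂ)
      (fun g => by
        rw [mem_rootsOfUnity]
        exact (hmemiff g.1).mp g.2)
  have hφval : ∀ g : ↥(GammaSL ℓ r),
      ((φ g : ℂˣ)) = Matrix.GeneralLinearGroup.det (g.1 i) := fun g => rfl
  have hinj : Function.Injective φ := by
    intro p q hpq
    have h1 : Matrix.GeneralLinearGroup.det (p.1 i) = Matrix.GeneralLinearGroup.det (q.1 i) := by
      rw [← hφval, ← hφval, hpq]
    apply Subtype.ext
    funext j
    rcases eq_or_ne j i with rfl | hj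
    · apply Units.ext
      have h2 := congrArg Units.val h1
      rw [Matrix.GeneralLinearGroup.val_det_apply, Matrix.GeneralLinearGroup.val_det_apply,
        Matrix.det_unique, Matrix.det_unique] at h2
      funext a b
      rw [Subsingleton.elim a default, Subsingleton.elim b default]
      exact h2
    · haveI := hsub j hj
      exact Subsingleton.elim _ _
  have hsurj : Function.Surjective φ := by
    intro ζ
    have hdetζ : Matrix.GeneralLinearGroup.det (sclGL (r i) (ζ : ℂˣ)) = (ζ : ℂˣ) := by
      rw [det_sclGL, hri, pow_one]
    have hgΓ : (Pi.mulSingle i (sclGL (r i) (ζ : ℂˣ)) : (k : Fin ℓ) → GL (Fin (r k)) ℂ) ∈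
        GammaSL ℓ r := by
      rw [hmemiff, Pi.mulSingle_eq_same, hdetζ]
      exact (mem_rootsOfUnity n (ζ : ℂˣ)).mp ζ.2
    refine ⟨⟨Pi.mulSingle i (sclGL (r i) (ζ : ℂˣ)), hgΓ⟩, ?_⟩
    apply Subtype.ext
    rw [hφval]
    show Matrix.GeneralLinearGroup.det
      ((Pi.mulSingle i (sclGL (r i) (ζ : ℂˣ)) : (k : Fin ℓ) → GL (Fin (r k)) ℂ) i) = (ζ : ℂˣ)
    rw [Pi.mulSingle_eq_same, hdetζ]
  haveI : NeZero n := ⟨by omega⟩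
  haveI hfinroots : Finite ↥(rootsOfUnity n ℂ) := inferInstance
  haveI hfinΓ : Finite ↥(GammaSL ℓ r) := Finite.of_injective φ hinj
  refine ⟨hfinΓ, ⟨MulEquiv.ofBijective φ ⟨hinj, hsurj⟩⟩, ?_⟩
  intro s h _ _
  apply Set.Finite.subset (Set.toFinite ((GammaSL ℓ r : Set _)))
  intro g hg
  exact hg.1


set_option maxHeartbeats 1600000

/-- An element `(x_1, …, x_ℓ)` is semisimple if each component `x_i` is diagonalizable. -/
def IsSemisimpleSL (ℓ : ℕ) (r : Fin ℓ → ℕ) (x : (i : Fin ℓ) → GL (Fin (r i)) ℂ) : Prop :=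
  ∀ i, ∃ g : GL (Fin (r i)) ℂ,
    ((g * x i * g⁻¹ : GL (Fin (r i)) ℂ) : Matrix (Fin (r i)) (Fin (r i)) ℂ).IsDiag

/-- Let `λ` be a partition of `n` (with `n ≥ 1`) with part `i` occurring `r_i`
times.  Then `Γ_SL(λ)` contains a pair `(s,h)` of commuting semisimple elements whose
simultaneous centralizer `{g ∈ Γ_SL(λ) : gs = sg and gh = hg}` is finite if and only if
`λ = (n)`, i.e. `λ` has a single part equal to `n`.  In that case `Γ_SL((n))` is finite,
isomorphic to the group of `n`-th roots of unity, and every pair of its elements has finite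
simultaneous centralizer. -/
theorem stmt10 (ℓ n : ℕ) (hn1 : 1 ≤ n) (r : Fin ℓ → ℕ)
    (hn : ∑ i : Fin ℓ, ((i : ℕ) + 1) * r i = n) :
    ((∃ s h : (i : Fin ℓ) → GL (Fin (r i)) ℂ,
        s ∈ GammaSL ℓ r ∧ h ∈ GammaSL ℓ r ∧
        IsSemisimpleSL ℓ r s ∧ IsSemisimpleSL ℓ r h ∧ s * h = h * s ∧
        Set.Finite {g : (i : Fin ℓ) → GL (Fin (r i)) ℂ |
          g ∈ GammaSL ℓ r ∧ g * s = s * g ∧ g * h = h * g})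
      ↔ ∃ i : Fin ℓ, (i : ℕ) + 1 = n ∧ r i = 1 ∧ ∀ j : Fin ℓ, j ≠ i → r j = 0)
    ∧ ((∃ i : Fin ℓ, (i : ℕ) + 1 = n ∧ r i = 1 ∧ ∀ j : Fin ℓ, j ≠ i → r j = 0) →
        (Finite ↥(GammaSL ℓ r) ∧
         Nonempty (↥(GammaSL ℓ r) ≃* ↥(rootsOfUnity n ℂ)) ∧
         ∀ s h : (i : Fin ℓ) → GL (Fin (r i)) ℂ, s ∈ GammaSL ℓ r → h ∈ GammaSL ℓ r →
           Set.Finite {g : (i : Fin ℓ) → GL (Fin (r i)) ℂ |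
             g ∈ GammaSL ℓ r ∧ g * s = s * g ∧ g * h = h * g})) := by
  have part2 : (∃ i : Fin ℓ, (i : ℕ) + 1 = n ∧ r i = 1 ∧ ∀ j : Fin ℓ, j ≠ i → r j = 0) →
      (Finite ↥(GammaSL ℓ r) ∧
       Nonempty (↥(GammaSL ℓ r) ≃* ↥(rootsOfUnity n ℂ)) ∧
       ∀ s h : (i : Fin ℓ) → GL (Fin (r i)) ℂ, s ∈ GammaSL ℓ r → h ∈ GammaSL ℓ r →
         Set.Finite {g : (i : Fin ℓ) → GL (Fin (r i)) ℂ |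
           g ∈ GammaSL ℓ r ∧ g * s = s * g ∧ g * h = h * g}) := by
    rintro ⟨i, hin, hri, hz⟩
    exact part2aux ℓ n r i hin hri hz
  refine ⟨⟨?_, ?_⟩, part2⟩
  · rintro ⟨s, h, hsΓ, hhΓ, -, -, hcomm, hfin⟩
    by_contra hnot
    have hex : ∃ i, r i ≠ 0 := by
      by_contra hall
      push_neg at hall
      simp only [hall, mul_zero, Finset.sum_const_zero] at hn
      omega
    obtain ⟨i, hi⟩ := hex
    by_cases h2 : ∃ j, j ≠ i ∧ r j ≠ 0
    · obtain ⟨j, hji, hj⟩ := h2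
      exact (centralizer_infinite_two ℓ r (Ne.symm hji) hi hj s h) hfin
    · push_neg at h2
      rcases eq_or_ne (r i) 1 with h1 | hne1
      · apply hnot
        refine ⟨i, ?_, h1, h2⟩
        have hsum : ∑ k : Fin ℓ, ((k : ℕ) + 1) * r k = ((i : ℕ) + 1) * r i :=
          Finset.sum_eq_single i (fun j _ hj => by rw [h2 j hj, mul_zero])
            (fun hi' => absurd (Finset.mem_univ i) hi')
        rw [hsum, h1, mul_one] at hn
        exact hn
      · have hri2 : 2 ≤ r i := by omega
        exact (centralizer_infinite_one ℓ r hri2 s h hcomm) hfin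
  · rintro hrhs
    obtain ⟨-, -, hcent⟩ := part2 hrhs
    have hssone : IsSemisimpleSL ℓ r 1 := by
      intro k
      refine ⟨1, ?_⟩
      have : ((1 : GL (Fin (r k)) ℂ) * (1 : (i : Fin ℓ) → GL (Fin (r i)) ℂ) k * 1⁻¹ :
          GL (Fin (r k)) ℂ) = 1 := by
        simp
      rw [this]
      show (1 : Matrix (Fin (r k)) (Fin (r k)) ℂ).IsDiag
      exact Matrix.isDiag_one
    exact ⟨1, 1, one_mem _, one_mem _, hssone, hssone, rfl,
      hcent 1 1 (one_mem _) (one_mem _)⟩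
end

section
/- Let d, m ≥ 1 and n = dm. The elliptic elements of G = (S_m)^d ⋊ ℤ/dℤ (those with no nonzero fixed vector in V) form exactly φ(d) conjugacy classes of G, where φ is Euler's totient function, with representatives (w_m, 1, …, 1)·η as η ranges over the elements of ℤ/dℤ of order d. -/
/-- The wreath product `(S_m)^d ⋊ ℤ/dℤ`, realized concretely as the subgroup of permutations
of the `n = d·m` coordinates (indexed by pairs `(i,j)` with `i : ZMod d` the block index and
`j : Fin m` the position within the block) that shift the block index by a constant amount. -/
def wrG (d m : ℕ) : Subgroup (Equiv.Perm (ZMod d × Fin m)) where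
  carrier := {π | ∃ a : ZMod d, ∀ p : ZMod d × Fin m, (π p).1 = p.1 + a}
  one_mem' := ⟨0, fun p => by simp⟩
  mul_mem' := by
    rintro π σ ⟨a, ha⟩ ⟨b, hb⟩
    refine ⟨b + a, fun p => ?_⟩
    have : (π * σ) p = π (σ p) := rfl
    rw [this, ha, hb, add_assoc]
  inv_mem' := by
    rintro π ⟨a, ha⟩
    refine ⟨-a, fun p => ?_⟩
    have h1 := ha (π⁻¹ p)
    rw [show π (π⁻¹ p) = p from (Equiv.eq_symm_apply π).mp rfl] at h1
    rw [h1, add_neg_cancel_right]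

/-- The element `(σ_1, …, σ_d)·ξ^a` of the wreath product `(S_m)^d ⋊ ℤ/dℤ` (here with blocks
indexed by `ZMod d`): it sends the coordinate `(i, j)` to `(i + a, σ_{i+a} j)`, i.e. first `ξ^a`
shifts every block up by `a`, and then `σ_k` permutes the coordinates within the `k`-th block. -/
def wrElt (d m : ℕ) (σ : ZMod d → Equiv.Perm (Fin m)) (a : ZMod d) :
    Equiv.Perm (ZMod d × Fin m) where
  toFun p := (p.1 + a, σ (p.1 + a) p.2)
  invFun p := (p.1 - a, (σ p.1)⁻¹ p.2)
  left_inv p := by simp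
  right_inv p := by simp

/-- An element `g` of the wreath product is elliptic if it has no nonzero fixed vector in
`V = {x ∈ ℂ^n : x_1 + ⋯ + x_n = 0}` (the action being by permutation of coordinates). -/
def IsElliptic (d m : ℕ) [NeZero d] (g : Equiv.Perm (ZMod d × Fin m)) : Prop :=
  ∀ v : ZMod d × Fin m → ℂ,
    (∑ p : ZMod d × Fin m, v p = 0) → (∀ p, v (g p) = v p) → v = 0

namespace S13

open Equiv

/-- The cyclic group generated by `g` acts transitively. -/
def Transit {α : Type*} (g : Equiv.Perm α) : Prop := ∀ p q : α, ∃ k : ℕ, (g ^ k) p = q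

/-- reducing a multiple of an element modulo its additive order -/
lemma nsmul_mod_addOrderOf {A : Type*} [AddGroup A] (a : A) (k : ℕ) :
    (k % addOrderOf a) • a = k • a := by
  conv_rhs => rw [← Nat.div_add_mod k (addOrderOf a)]
  rw [add_nsmul, mul_nsmul, addOrderOf_nsmul_eq_zero, smul_zero, zero_add]

lemma fst_pow {d m : ℕ} (g : Perm (ZMod d × Fin m)) (a : ZMod d)
    (ha : ∀ p, (g p).1 = p.1 + a) :
    ∀ (k : ℕ) (p), ((g ^ k) p).1 = p.1 + k • a := by
  intro k
  induction k with
  | zero => intro p; simp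
  | succ k ih =>
    intro p
    rw [pow_succ, Equiv.Perm.mul_apply, ih, ha, succ_nsmul]
    abel

lemma trans_isElliptic (d m : ℕ) [NeZero d] (hm : 1 ≤ m) (g : Perm (ZMod d × Fin m))
    (h : Transit g) : IsElliptic d m g := by
  intro v hsum hfix
  have key : ∀ (k : ℕ) (p), v ((g ^ k) p) = v p := by
    intro k
    induction k with
    | zero => intro p; simp
    | succ k ih =>
      intro p
      rw [pow_succ, Equiv.Perm.mul_apply, ih, hfix]
  set p0 : ZMod d × Fin m := (0, ⟨0, hm⟩) with hp0
  have : Nonempty (ZMod d × Fin m) := ⟨p0⟩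
  have hconst : ∀ p, v p = v p0 := by
    intro p
    obtain ⟨k, hk⟩ := h p0 p
    rw [← hk, key]
  have hs : ∑ p : ZMod d × Fin m, v p = (Fintype.card (ZMod d × Fin m) : ℂ) * v p0 := by
    rw [Finset.sum_congr rfl (fun p _ => hconst p), Finset.sum_const, Finset.card_univ,
      nsmul_eq_mul]
  rw [hs] at hsum
  have hcard : (Fintype.card (ZMod d × Fin m) : ℂ) ≠ 0 :=
    Nat.cast_ne_zero.mpr Fintype.card_ne_zero
  have hz : v p0 = 0 := (mul_eq_zero.mp hsum).resolve_left hcard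
  funext p
  rw [hconst p, hz]
  rfl

lemma isElliptic_trans (d m : ℕ) [NeZero d] (g : Perm (ZMod d × Fin m))
    (he : IsElliptic d m g) : Transit g := by
  classical
  intro p q
  by_contra hc
  push_neg at hc
  set Pr : ZMod d × Fin m → Prop := fun x => ∃ k : ℕ, (g ^ k) p = x with hPr
  set O : Finset (ZMod d × Fin m) := Finset.univ.filter Pr with hO
  set Oc : Finset (ZMod d × Fin m) := Finset.univ.filter (fun x => ¬ Pr x) with hOc
  set v : ZMod d × Fin m → ℂ := fun x => if Pr x then (Oc.card : ℂ) else -(O.card : ℂ) with hv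
  have hstep : ∀ x, Pr x ↔ Pr (g x) := by
    intro x
    constructor
    · rintro ⟨k, hk⟩
      exact ⟨k + 1, by rw [pow_succ', Equiv.Perm.mul_apply, hk]⟩
    · rintro ⟨k, hk⟩
      have hopos : 1 ≤ orderOf g := orderOf_pos g
      refine ⟨orderOf g - 1 + k, ?_⟩
      rw [pow_add, Equiv.Perm.mul_apply, hk]
      have e1 : (g ^ (orderOf g - 1)) (g x) = ((g ^ (orderOf g - 1)) * g) x := rfl
      rw [e1, ← pow_succ, Nat.sub_add_cancel hopos, pow_orderOf_eq_one]
      rfl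
  have hinv : ∀ x, v (g x) = v x := by
    intro x
    by_cases hx : Pr x
    · simp only [hv]
      rw [if_pos ((hstep x).mp hx), if_pos hx]
    · simp only [hv]
      rw [if_neg (fun h => hx ((hstep x).mpr h)), if_neg hx]
  have hsum : ∑ x : ZMod d × Fin m, v x = 0 := by
    rw [← Finset.sum_filter_add_sum_filter_not Finset.univ Pr v]
    have h1 : ∑ x ∈ Finset.univ.filter Pr, v x = (O.card : ℂ) * (Oc.card : ℂ) := by
      rw [Finset.sum_congr rfl (fun x hx => ?_), Finset.sum_const, nsmul_eq_mul, hO]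
      simp only [hv]
      rw [if_pos (Finset.mem_filter.mp hx).2]
    have h2 : ∑ x ∈ Finset.univ.filter (fun x => ¬ Pr x), v x
        = (Oc.card : ℂ) * (-(O.card : ℂ)) := by
      rw [Finset.sum_congr rfl (fun x hx => ?_), Finset.sum_const, nsmul_eq_mul, hOc]
      simp only [hv]
      rw [if_neg (Finset.mem_filter.mp hx).2]
    rw [h1, h2]
    ring
  have hzero := he v hsum hinv
  have hvp : v p = (Oc.card : ℂ) := by
    simp only [hv]
    rw [if_pos ⟨0, by simp⟩]
  have hq : q ∈ Oc := Finset.mem_filter.mpr ⟨Finset.mem_univ q, fun ⟨k, hk⟩ => hc k hk⟩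
  have hne : (Oc.card : ℂ) ≠ 0 :=
    Nat.cast_ne_zero.mpr (Finset.card_ne_zero_of_mem hq)
  apply hne
  rw [← hvp, hzero]
  rfl

lemma order_shift (d m : ℕ) [NeZero d] (hm : 1 ≤ m) (g : Perm (ZMod d × Fin m))
    (a : ZMod d) (ha : ∀ p, (g p).1 = p.1 + a) (htrans : Transit g) :
    addOrderOf a = d := by
  have hall : ∀ i : ZMod d, ∃ k : ℕ, k • a = i := by
    intro i
    obtain ⟨k, hk⟩ := htrans ((0 : ZMod d), (⟨0, hm⟩ : Fin m)) (i, ⟨0, hm⟩)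
    refine ⟨k, ?_⟩
    have h2 := congrArg Prod.fst hk
    rw [fst_pow g a ha] at h2
    simpa using h2
  have hda : (d : ℕ) • a = 0 := by rw [nsmul_eq_mul, ZMod.natCast_self, zero_mul]
  have h1 : addOrderOf a ∣ d := addOrderOf_dvd_iff_nsmul_eq_zero.mpr hda
  have hopos : 0 < addOrderOf a := by
    rcases Nat.eq_zero_or_pos (addOrderOf a) with h0 | h
    · exfalso
      have := (h0 ▸ h1 : 0 ∣ d)
      exact NeZero.ne d (Nat.eq_zero_of_zero_dvd this)
    · exact h
  have h2 : d ≤ addOrderOf a := by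
    have hsurj : Function.Surjective (fun k : Fin (addOrderOf a) => (k : ℕ) • a) := by
      intro i
      obtain ⟨k, hk⟩ := hall i
      refine ⟨⟨k % addOrderOf a, Nat.mod_lt _ hopos⟩, ?_⟩
      simp only
      rw [nsmul_mod_addOrderOf, hk]
    have := Fintype.card_le_of_surjective _ hsurj
    rwa [Fintype.card_fin, ZMod.card] at this
  exact Nat.le_antisymm (Nat.le_of_dvd (NeZero.pos d) h1) h2

lemma exists_nsmul_eq (d : ℕ) [NeZero d] (a : ZMod d) (h : addOrderOf a = d) (i : ZMod d) :
    ∃ k : ℕ, k • a = i ∧ k < d := by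
  have key : ∀ k l : Fin d, (k : ℕ) ≤ (l : ℕ) → (k : ℕ) • a = (l : ℕ) • a → k = l := by
    intro k l hle he
    have h0 : ((l : ℕ) - (k : ℕ)) • a = 0 := by
      have h3 : (l : ℕ) • a = (k : ℕ) • a + ((l : ℕ) - (k : ℕ)) • a := by
        rw [← add_nsmul, Nat.add_sub_cancel' hle]
      rw [← he] at h3
      exact (left_eq_add.mp h3)
    have hdvd : d ∣ (l : ℕ) - (k : ℕ) := by
      have h4 := addOrderOf_dvd_iff_nsmul_eq_zero.mpr h0
      rwa [h] at h4
    have hz : (l : ℕ) - (k : ℕ) = 0 := Nat.eq_zero_of_dvd_of_lt hdvd (by omega)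
    exact Fin.ext (by omega)
  have hinj : Function.Injective (fun k : Fin d => (k : ℕ) • a) := by
    intro k l hkl
    simp only at hkl
    rcases le_total ((k : ℕ)) ((l : ℕ)) with hle | hle
    · exact key k l hle hkl
    · exact (key l k hle hkl.symm).symm
  have hbij : Function.Bijective (fun k : Fin d => (k : ℕ) • a) :=
    (Fintype.bijective_iff_injective_and_card _).mpr
      ⟨hinj, by rw [Fintype.card_fin, ZMod.card]⟩
  obtain ⟨k, hk⟩ := hbij.2 i
  exact ⟨(k : ℕ), hk, k.isLt⟩

lemma addOrderOf_eq_iff_isUnit (d : ℕ) [NeZero d] (a : ZMod d) :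
    addOrderOf a = d ↔ IsUnit a := by
  constructor
  · intro h
    obtain ⟨k, hk, _⟩ := exists_nsmul_eq d a h 1
    refine IsUnit.of_mul_eq_one (a := a) (k : ZMod d) ?_
    rw [mul_comm, ← nsmul_eq_mul]
    exact hk
  · rintro ⟨u, rfl⟩
    have hda : (d : ℕ) • (u : ZMod d) = 0 := by
      rw [nsmul_eq_mul, ZMod.natCast_self, zero_mul]
    have h1 : addOrderOf (u : ZMod d) ∣ d := addOrderOf_dvd_iff_nsmul_eq_zero.mpr hda
    have h2 : d ∣ addOrderOf (u : ZMod d) := by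
      have h0 : ((addOrderOf (u : ZMod d) : ℕ) : ZMod d) * (u : ZMod d) = 0 := by
        rw [← nsmul_eq_mul]
        exact addOrderOf_nsmul_eq_zero _
      have h3 : ((addOrderOf (u : ZMod d) : ℕ) : ZMod d) = 0 :=
        (Units.mul_left_eq_zero u).mp h0
      exact (ZMod.natCast_eq_zero_iff _ _).mp h3
    exact Nat.dvd_antisymm h1 h2

lemma card_order_eq_totient (d : ℕ) [NeZero d] :
    Nat.card {η : ZMod d // addOrderOf η = d} = Nat.totient d := by
  have hf : Function.Bijective
      (fun u : (ZMod d)ˣ =>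
        (⟨(u : ZMod d), (addOrderOf_eq_iff_isUnit d _).mpr ⟨u, rfl⟩⟩ :
          {η : ZMod d // addOrderOf η = d})) := by
    constructor
    · intro u u' h
      exact Units.ext (congrArg Subtype.val h)
    · rintro ⟨x, hx⟩
      obtain ⟨u, hu⟩ := (addOrderOf_eq_iff_isUnit d x).mp hx
      exact ⟨u, Subtype.ext hu⟩
  rw [← Nat.card_eq_of_bijective _ hf, Nat.card_eq_fintype_card,
    ZMod.card_units_eq_totient]

/-- two permutations generating transitive cyclic groups are conjugate -/
lemma conj_of_transit {m : ℕ} (u v : Perm (Fin m)) (hu : Transit u) (hv : Transit v) :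
    ∃ c : Perm (Fin m), c * u * c⁻¹ = v := by
  rcases le_or_gt m 1 with h1 | h2
  · refine ⟨1, ?_⟩
    have hss : Subsingleton (Fin m) := ⟨fun a b => Fin.ext (by omega)⟩
    have huv : u = v := Equiv.ext fun x => Subsingleton.elim _ _
    simp [huv]
  · have : Nontrivial (Fin m) := Fin.nontrivial_iff_two_le.mpr h2
    have hfix : ∀ (w : Perm (Fin m)), Transit w → ∀ x, w x ≠ x := by
      intro w hw x hx
      obtain ⟨y, hy⟩ := exists_ne x
      obtain ⟨k, hk⟩ := hw x y
      have hfx : ∀ k : ℕ, (w ^ k) x = x := by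
        intro k
        induction k with
        | zero => simp
        | succ k ih => rw [pow_succ, Equiv.Perm.mul_apply, hx, ih]
      exact hy (((hfx k).symm.trans hk).symm)
    have hcyc : ∀ (w : Perm (Fin m)), Transit w → w.IsCycle := by
      intro w hw
      refine ⟨⟨0, by omega⟩, hfix w hw ⟨0, by omega⟩, fun y _ => ?_⟩
      obtain ⟨k, hk⟩ := hw ⟨0, by omega⟩ y
      exact ⟨(k : ℤ), by rw [zpow_natCast]; exact hk⟩
    have hsupp : ∀ (w : Perm (Fin m)), Transit w → w.support = Finset.univ := by
      intro w hw
      ext x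
      simp [Equiv.Perm.mem_support, hfix w hw x]
    have hconj := (hcyc u hu).isConj (hcyc v hv) (by rw [hsupp u hu, hsupp v hv])
    exact isConj_iff.mp hconj

/-- the within-block permutation of `g` at block `i` (so that
`g (i, j) = (i + a, blockPerm g a ha (i + a) j)`). -/
def blockPerm {d m : ℕ} (g : Perm (ZMod d × Fin m)) (a : ZMod d)
    (ha : ∀ p, (g p).1 = p.1 + a) (i : ZMod d) : Perm (Fin m) where
  toFun j := (g (i - a, j)).2
  invFun j := (g⁻¹ (i, j)).2
  left_inv j := by
    have hfst : (g (i - a, j)).1 = i := by rw [ha]; exact sub_add_cancel i a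
    have h1 : ((i : ZMod d), (g (i - a, j)).2) = g (i - a, j) :=
      Prod.ext hfst.symm rfl
    show (g⁻¹ (i, (g (i - a, j)).2)).2 = j
    rw [h1]
    exact congrArg Prod.snd (Equiv.symm_apply_apply g (i - a, j))
  right_inv j := by
    have hfst : (g⁻¹ (i, j)).1 = i - a := by
      have h1 := ha (g⁻¹ (i, j))
      rw [show g (g⁻¹ (i, j)) = (i, j) from Equiv.apply_symm_apply g _] at h1
      exact eq_sub_of_add_eq h1.symm
    have h1 : ((i - a : ZMod d), (g⁻¹ (i, j)).2) = g⁻¹ (i, j) :=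
      Prod.ext hfst.symm rfl
    show (g (i - a, (g⁻¹ (i, j)).2)).2 = j
    rw [h1]
    exact congrArg Prod.snd (Equiv.apply_symm_apply g (i, j))

lemma blockPerm_spec {d m : ℕ} (g : Perm (ZMod d × Fin m)) (a : ZMod d)
    (ha : ∀ p, (g p).1 = p.1 + a) (p : ZMod d × Fin m) :
    g p = (p.1 + a, blockPerm g a ha (p.1 + a) p.2) := by
  obtain ⟨x, y⟩ := p
  have h2 : blockPerm g a ha (x + a) y = (g (x + a - a, y)).2 := rfl
  rw [h2, add_sub_cancel_right]
  exact Prod.ext (ha (x, y)) rfl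

/-- the product of block permutations appearing in `g ^ k` at block `k • a`, starting
from block `0`. -/
def Pprod {d m : ℕ} (g : Perm (ZMod d × Fin m)) (a : ZMod d)
    (ha : ∀ p, (g p).1 = p.1 + a) : ℕ → Perm (Fin m)
  | 0 => 1
  | (k + 1) => blockPerm g a ha ((k + 1) • a) * Pprod g a ha k

lemma pow_apply_zero_block {d m : ℕ} (g : Perm (ZMod d × Fin m)) (a : ZMod d)
    (ha : ∀ p, (g p).1 = p.1 + a) (k : ℕ) (j : Fin m) :
    (g ^ k) ((0 : ZMod d), j) = (k • a, Pprod g a ha k j) := by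
  induction k with
  | zero => simp [Pprod]
  | succ k ih =>
    calc (g ^ (k + 1)) ((0 : ZMod d), j) = g ((g ^ k) ((0 : ZMod d), j)) := by
          rw [pow_succ', Equiv.Perm.mul_apply]
      _ = g (k • a, Pprod g a ha k j) := by rw [ih]
      _ = (k • a + a, blockPerm g a ha (k • a + a) (Pprod g a ha k j)) :=
          blockPerm_spec g a ha _
      _ = ((k + 1) • a, Pprod g a ha (k + 1) j) := by rw [← succ_nsmul]; rfl

end S13

section main

open Equiv S13

variable {d m : ℕ}

/-- the standard representative `(w_m, 1, …, 1) · η` -/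
private lemma rep_fst [NeZero d] (wm : Perm (Fin m)) (η : ZMod d)
    (p : ZMod d × Fin m) :
    ((wrElt d m (fun i => if i = 0 then wm else 1) η) p).1 = p.1 + η := rfl

private lemma rep_mem [NeZero d] (wm : Perm (Fin m)) (η : ZMod d) :
    wrElt d m (fun i => if i = 0 then wm else 1) η ∈ wrG d m :=
  ⟨η, fun _ => rfl⟩

private lemma nsmul_ne_zero_of_lt [NeZero d] {η : ZMod d} (hη : addOrderOf η = d)
    {k : ℕ} (h0 : 0 < k) (hk : k < d) : k • η ≠ 0 := by
  intro h
  have : d ∣ k := hη ▸ addOrderOf_dvd_iff_nsmul_eq_zero.mpr h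
  exact absurd (Nat.le_of_dvd h0 this) (by omega)

private lemma rep_block [NeZero d] (wm : Perm (Fin m)) (η : ZMod d) (i : ZMod d) :
    blockPerm (wrElt d m (fun i => if i = 0 then wm else 1) η) η (fun _ => rfl) i
      = (fun i : ZMod d => if i = 0 then wm else 1) i := by
  apply Equiv.ext
  intro j
  show ((wrElt d m (fun i => if i = 0 then wm else 1) η) (i - η, j)).2 = _
  rw [show (wrElt d m (fun i => if i = 0 then wm else 1) η) (i - η, j)
      = (i - η + η, (if i - η + η = 0 then wm else 1) j) from rfl]
  simp only [sub_add_cancel]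

private lemma rep_Pprod_lt [NeZero d] (wm : Perm (Fin m)) (η : ZMod d)
    (hη : addOrderOf η = d) :
    ∀ k : ℕ, k < d → Pprod (wrElt d m (fun i => if i = 0 then wm else 1) η) η
      (fun _ => rfl) k = 1 := by
  intro k
  induction k with
  | zero => intro _; rfl
  | succ k ih =>
    intro hk
    show blockPerm _ η _ ((k + 1) • η) * Pprod _ η _ k = 1
    rw [ih (by omega), rep_block]
    simp only [mul_one]
    rw [if_neg (nsmul_ne_zero_of_lt hη (Nat.succ_pos k) hk)]


private lemma rep_Pprod_d [NeZero d] (hd : 1 ≤ d) (wm : Perm (Fin m)) (η : ZMod d)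
    (hη : addOrderOf η = d) :
    Pprod (wrElt d m (fun i => if i = 0 then wm else 1) η) η (fun _ => rfl) d = wm := by
  obtain ⟨e, rfl⟩ : ∃ e, d = e + 1 := ⟨d - 1, by omega⟩
  have hdη : ((e + 1 : ℕ)) • η = 0 := by
    rw [nsmul_eq_mul, ZMod.natCast_self, zero_mul]
  show blockPerm (wrElt (e + 1) m (fun i => if i = 0 then wm else 1) η) η (fun _ => rfl)
      ((e + 1 : ℕ) • η)
    * Pprod (wrElt (e + 1) m (fun i => if i = 0 then wm else 1) η) η (fun _ => rfl) e = wm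
  rw [rep_Pprod_lt wm η hη e (by omega), mul_one, rep_block, hdη]
  simp

private lemma rep_pow_d [NeZero d] (hd : 1 ≤ d) (wm : Perm (Fin m)) (η : ZMod d)
    (hη : addOrderOf η = d) (j : Fin m) :
    ((wrElt d m (fun i => if i = 0 then wm else 1) η) ^ d) ((0 : ZMod d), j)
      = (0, wm j) := by
  rw [pow_apply_zero_block _ η (fun _ => rfl) d j, rep_Pprod_d hd wm η hη]
  have hdη : d • η = 0 := by rw [nsmul_eq_mul, ZMod.natCast_self, zero_mul]
  rw [hdη]

private lemma rep_pow_mul_d [NeZero d] (hd : 1 ≤ d) (wm : Perm (Fin m)) (η : ZMod d)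
    (hη : addOrderOf η = d) (s : ℕ) (j : Fin m) :
    ((wrElt d m (fun i => if i = 0 then wm else 1) η) ^ (d * s)) ((0 : ZMod d), j)
      = (0, (wm ^ s) j) := by
  induction s generalizing j with
  | zero => simp
  | succ s ih =>
    have h1 : d * (s + 1) = d * s + d := by ring
    rw [h1, pow_add, Equiv.Perm.mul_apply, rep_pow_d hd wm η hη, ih (wm j), pow_succ,
      Equiv.Perm.mul_apply]

private lemma rep_transit [NeZero d] (hd : 1 ≤ d) (wm : Perm (Fin m))
    (hwm : ∀ a b : Fin m, ∃ k : ℕ, (wm ^ k) a = b) (η : ZMod d)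
    (hη : addOrderOf η = d) :
    Transit (wrElt d m (fun i => if i = 0 then wm else 1) η) := by
  set r := wrElt d m (fun i => if i = 0 then wm else 1) η with hr
  rintro ⟨i, j⟩ ⟨i', j'⟩
  obtain ⟨t, hta, ht⟩ := exists_nsmul_eq d η hη i
  obtain ⟨t', hta', ht'⟩ := exists_nsmul_eq d η hη i'
  have h1 : (r ^ t) ((0 : ZMod d), j) = (i, j) := by
    rw [hr, pow_apply_zero_block _ η (fun _ => rfl) t j, rep_Pprod_lt wm η hη t ht, hta]
    rfl
  have h2 : (r ^ t') ((0 : ZMod d), j') = (i', j') := by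
    rw [hr, pow_apply_zero_block _ η (fun _ => rfl) t' j', rep_Pprod_lt wm η hη t' ht', hta']
    rfl
  obtain ⟨s, hs⟩ := hwm j j'
  have hop : 1 ≤ orderOf wm := orderOf_pos wm
  have hws' : (wm ^ (s + orderOf wm * t)) j = j' := by
    rw [pow_add, Equiv.Perm.mul_apply, pow_mul, pow_orderOf_eq_one, one_pow,
      Equiv.Perm.one_apply, hs]
  have hts' : t ≤ d * (s + orderOf wm * t) := by
    calc t ≤ orderOf wm * t := Nat.le_mul_of_pos_left t hop
    _ ≤ s + orderOf wm * t := Nat.le_add_left _ _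
    _ ≤ d * (s + orderOf wm * t) := Nat.le_mul_of_pos_left _ hd
  refine ⟨d * (s + orderOf wm * t) + t' - t, ?_⟩
  have hsum : (d * (s + orderOf wm * t) + t' - t) + t
      = t' + d * (s + orderOf wm * t) := by omega
  calc (r ^ (d * (s + orderOf wm * t) + t' - t)) (i, j)
      = (r ^ (d * (s + orderOf wm * t) + t' - t)) ((r ^ t) (0, j)) := by rw [h1]
    _ = (r ^ ((d * (s + orderOf wm * t) + t' - t) + t)) ((0 : ZMod d), j) := by
        rw [pow_add, Equiv.Perm.mul_apply]
    _ = (r ^ t') ((r ^ (d * (s + orderOf wm * t))) ((0 : ZMod d), j)) := by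
        rw [hsum, pow_add, Equiv.Perm.mul_apply]
    _ = (r ^ t') ((0 : ZMod d), j') := by rw [hr, rep_pow_mul_d hd wm η hη _ j, hws']
    _ = (i', j') := h2

/-- auxiliary sequence of within-block conjugators -/
def Tseq {m d : ℕ} (γ σ' : ZMod d → Equiv.Perm (Fin m)) (τ0 : Equiv.Perm (Fin m))
    (a : ZMod d) : ℕ → Equiv.Perm (Fin m)
  | 0 => τ0
  | (k + 1) => γ ((k + 1) • a) * Tseq γ σ' τ0 a k * (σ' ((k + 1) • a))⁻¹

private lemma conj_lemma [NeZero d] (hd : 1 ≤ d) (hm : 1 ≤ m)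
    (wm : Perm (Fin m)) (hwm : ∀ a b : Fin m, ∃ k : ℕ, (wm ^ k) a = b)
    (g : Perm (ZMod d × Fin m)) (a : ZMod d) (ha : ∀ p, (g p).1 = p.1 + a)
    (horder : addOrderOf a = d) (htrans : Transit g) :
    ∃ c ∈ wrG d m, c * wrElt d m (fun i => if i = 0 then wm else 1) a * c⁻¹ = g := by
  classical
  let σ' : ZMod d → Perm (Fin m) := fun i => if i = 0 then wm else 1
  let γ : ZMod d → Perm (Fin m) := blockPerm g a ha
  let P : ℕ → Perm (Fin m) := Pprod g a ha
  have hda : (d : ℕ) • a = 0 := by rw [nsmul_eq_mul, ZMod.natCast_self, zero_mul]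
  have hPds : ∀ (s : ℕ) (j : Fin m),
      (g ^ (d * s)) ((0 : ZMod d), j) = (0, ((P d) ^ s) j) := by
    intro s
    induction s with
    | zero => intro j; simp
    | succ s ih =>
      intro j
      have h1 : d * (s + 1) = d * s + d := by ring
      rw [h1, pow_add, Equiv.Perm.mul_apply, pow_apply_zero_block g a ha d j, hda,
        ih (Pprod g a ha d j), pow_succ, Equiv.Perm.mul_apply]
  have hPtrans : Transit (P d) := by
    intro j j'
    obtain ⟨k, hk⟩ := htrans ((0 : ZMod d), j) (0, j')
    have hfst := congrArg Prod.fst hk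
    rw [fst_pow g a ha, zero_add] at hfst
    have hdvd : d ∣ k := horder ▸ addOrderOf_dvd_iff_nsmul_eq_zero.mpr hfst
    obtain ⟨s, rfl⟩ := hdvd
    rw [hPds s j] at hk
    exact ⟨s, congrArg Prod.snd hk⟩
  obtain ⟨τ0, hτ0⟩ := conj_of_transit wm (P d) hwm hPtrans
  let T : ℕ → Perm (Fin m) := Tseq γ σ' τ0 a
  have hσ1 : ∀ k : ℕ, 0 < k → k < d → σ' (k • a) = 1 := by
    intro k h0 hk
    show (if (k • a : ZMod d) = 0 then wm else 1) = 1
    rw [if_neg (nsmul_ne_zero_of_lt horder h0 hk)]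
  have hσd : σ' ((d : ℕ) • a) = wm := by
    rw [hda]
    show (if (0 : ZMod d) = 0 then wm else 1) = wm
    rw [if_pos rfl]
  have hC1 : ∀ k : ℕ, k < d → T k = P k * τ0 := by
    intro k
    induction k with
    | zero =>
      intro _
      show τ0 = 1 * τ0
      rw [one_mul]
    | succ k ih =>
      intro hk
      show γ ((k + 1) • a) * T k * (σ' ((k + 1) • a))⁻¹ = P (k + 1) * τ0
      rw [ih (by omega), hσ1 (k + 1) (Nat.succ_pos k) hk, inv_one, mul_one]
      show γ ((k + 1) • a) * (P k * τ0) = (γ ((k + 1) • a) * P k) * τ0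
      rw [mul_assoc]
  have hC2 : T d = τ0 := by
    have hd1 : d - 1 + 1 = d := by omega
    have e1 : T d = γ ((d - 1 + 1) • a) * T (d - 1) * (σ' ((d - 1 + 1) • a))⁻¹ := by
      conv_lhs => rw [← hd1]
      rfl
    have e3 : γ ((d - 1 + 1) • a) * P (d - 1) = P d := by
      conv_rhs => rw [← hd1]
      rfl
    rw [e1, hC1 (d - 1) (by omega), ← mul_assoc, e3, hd1, hσd, ← hτ0]
    group
  have hperiod : ∀ k : ℕ, T (k + d) = T k := by
    intro k
    induction k with
    | zero =>
      rw [Nat.zero_add, hC2]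
      rfl
    | succ k ih =>
      have e1 : k + 1 + d = (k + d) + 1 := by omega
      rw [e1]
      show γ ((k + d + 1) • a) * T (k + d) * (σ' ((k + d + 1) • a))⁻¹
        = γ ((k + 1) • a) * T k * (σ' ((k + 1) • a))⁻¹
      have e2 : (k + d + 1) • a = (k + 1) • a := by
        have e3 : k + d + 1 = (k + 1) + d := by omega
        rw [e3, add_nsmul, hda, add_zero]
      rw [e2, ih]
  have hmult : ∀ (t k : ℕ), T (k + d * t) = T k := by
    intro t
    induction t with
    | zero => intro k; rw [Nat.mul_zero, Nat.add_zero]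
    | succ t ih =>
      intro k
      have e1 : k + d * (t + 1) = (k + d * t) + d := by ring
      rw [e1, hperiod, ih]
  have hwd : ∀ k k' : ℕ, k • a = k' • a → T k = T k' := by
    have key : ∀ k k' : ℕ, k ≤ k' → k • a = k' • a → T k = T k' := by
      intro k k' hle he
      have h0 : (k' - k) • a = 0 := by
        have h3 : k' • a = k • a + (k' - k) • a := by
          rw [← add_nsmul, Nat.add_sub_cancel' hle]
        rw [← he] at h3
        exact (left_eq_add.mp h3)
      have hdvd : d ∣ k' - k := horder ▸ addOrderOf_dvd_iff_nsmul_eq_zero.mpr h0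
      obtain ⟨t, ht⟩ := hdvd
      have e1 : k' = k + d * t := by omega
      rw [e1, hmult]
    intro k k' he
    rcases le_total k k' with hle | hle
    · exact key k k' hle he
    · exact (key k' k hle he.symm).symm
  have hex : ∀ i : ZMod d, ∃ k : ℕ, k • a = i := by
    intro i
    obtain ⟨k, hk, _⟩ := exists_nsmul_eq d a horder i
    exact ⟨k, hk⟩
  have hex2 := hex
  choose kk hkk using hex
  let τ : ZMod d → Perm (Fin m) := fun i => T (kk i)
  have hτspec : ∀ k : ℕ, τ (k • a) = T k := by
    intro k
    show T (kk (k • a)) = T k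
    exact hwd (kk (k • a)) k (hkk (k • a))
  let c : Perm (ZMod d × Fin m) := wrElt d m τ 0
  have hcmem : c ∈ wrG d m := ⟨0, fun p => rfl⟩
  have hmain : c * wrElt d m σ' a = g * c := by
    apply Equiv.ext
    rintro ⟨i, j⟩
    obtain ⟨k, hk⟩ := hex2 i
    subst hk
    have lhs1 : (c * wrElt d m σ' a) (k • a, j)
        = ((k + 1) • a, τ ((k + 1) • a) (σ' ((k + 1) • a) j)) := by
      rw [Equiv.Perm.mul_apply]
      have e1 : (wrElt d m σ' a) (k • a, j) = (k • a + a, σ' (k • a + a) j) := rfl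
      have e2 : k • a + a = (k + 1) • a := (succ_nsmul a k).symm
      rw [e1, e2]
      have e3 : c ((k + 1) • a, σ' ((k + 1) • a) j)
          = ((k + 1) • a + 0, τ ((k + 1) • a + 0) (σ' ((k + 1) • a) j)) := rfl
      rw [e3, add_zero]
    have rhs1 : (g * c) (k • a, j) = ((k + 1) • a, γ ((k + 1) • a) (τ (k • a) j)) := by
      rw [Equiv.Perm.mul_apply]
      have e1 : c (k • a, j) = (k • a + 0, τ (k • a + 0) j) := rfl
      rw [e1, add_zero, blockPerm_spec g a ha]
      have e2 : k • a + a = (k + 1) • a := (succ_nsmul a k).symm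
      rw [← e2]
    rw [lhs1, rhs1, hτspec, hτspec]
    show (((k + 1) • a : ZMod d), (T (k + 1) * σ' ((k + 1) • a)) j)
      = (((k + 1) • a : ZMod d), (γ ((k + 1) • a) * T k) j)
    have hfun : T (k + 1) * σ' ((k + 1) • a) = γ ((k + 1) • a) * T k := by
      show γ ((k + 1) • a) * T k * (σ' ((k + 1) • a))⁻¹ * σ' ((k + 1) • a)
        = γ ((k + 1) • a) * T k
      group
    rw [hfun]
  refine ⟨c, hcmem, ?_⟩
  show c * wrElt d m σ' a * c⁻¹ = g
  rw [hmain, mul_inv_cancel_right]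

end main

/-- Let `d, m ≥ 1` and `n = dm`.  The elliptic elements of
`G = (S_m)^d ⋊ ℤ/dℤ` (those with no nonzero fixed vector in `V`) form exactly `φ(d)`
conjugacy classes of `G` (`φ` = Euler's totient function), with representatives
`(w_m, 1, …, 1)·η` as `η` ranges over the elements of `ℤ/dℤ` of order `d`: every such
representative is elliptic, and every elliptic element of `G` is conjugate in `G` to the
representative for exactly one such `η`. -/
theorem stmt13 (d m : ℕ) [NeZero d] (hd : 1 ≤ d) (hm : 1 ≤ m)
    (wm : Equiv.Perm (Fin m)) (hwm : ∀ a b : Fin m, ∃ k : ℕ, (wm ^ k) a = b) :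
    Nat.card (Quot (fun g₁ g₂ :
        {g : Equiv.Perm (ZMod d × Fin m) // g ∈ wrG d m ∧ IsElliptic d m g} =>
        ∃ c ∈ wrG d m, c * g₁.1 * c⁻¹ = g₂.1)) = Nat.totient d
    ∧ (∀ η : ZMod d, addOrderOf η = d →
        wrElt d m (fun i => if i = 0 then wm else 1) η ∈ wrG d m ∧
        IsElliptic d m (wrElt d m (fun i => if i = 0 then wm else 1) η))
    ∧ (∀ g : Equiv.Perm (ZMod d × Fin m), g ∈ wrG d m → IsElliptic d m g →
        ∃! η : ZMod d, addOrderOf η = d ∧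
          ∃ c ∈ wrG d m,
            c * (wrElt d m (fun i => if i = 0 then wm else 1) η) * c⁻¹ = g) := by
  classical
  have hrepmem : ∀ η : ZMod d, wrElt d m (fun i => if i = 0 then wm else 1) η ∈ wrG d m :=
    fun η => ⟨η, fun _ => rfl⟩
  have hrepell : ∀ η : ZMod d, addOrderOf η = d →
      IsElliptic d m (wrElt d m (fun i => if i = 0 then wm else 1) η) :=
    fun η hη => S13.trans_isElliptic d m hm _ (rep_transit hd wm hwm η hη)
  let p0 : ZMod d × Fin m := ((0 : ZMod d), (⟨0, hm⟩ : Fin m))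
  have hshift : ∀ (g : Equiv.Perm (ZMod d × Fin m)) (a : ZMod d),
      (∀ p, (g p).1 = p.1 + a) → (g p0).1 = a := by
    intro g a ha
    rw [ha]
    show (0 : ZMod d) + a = a
    rw [zero_add]
  have hconjfst : ∀ (g₁ g₂ c : Equiv.Perm (ZMod d × Fin m)) (a b : ZMod d),
      (∀ p, (g₁ p).1 = p.1 + a) → (∀ p : ZMod d × Fin m, (c p).1 = p.1 + b) →
      c * g₁ * c⁻¹ = g₂ → (g₂ p0).1 = a := by
    intro g₁ g₂ c a b ha hb hcg
    have hinvb : ∀ p : ZMod d × Fin m, ((c⁻¹ : Equiv.Perm _) p).1 = p.1 - b := by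
      intro p
      have h1 := hb (c⁻¹ p)
      rw [show c (c⁻¹ p) = p from Equiv.apply_symm_apply c p] at h1
      rw [eq_sub_of_add_eq h1.symm]
    rw [← hcg]
    have e1 : (c * g₁ * c⁻¹) p0 = c (g₁ (c⁻¹ p0)) := rfl
    rw [e1, hb, ha, hinvb]
    show (0 : ZMod d) - b + a + b = a
    abel
  refine ⟨?_, fun η hη => ⟨hrepmem η, hrepell η hη⟩, ?_⟩
  · -- counting conjugacy classes
    have Fdef : ∀ g : {g : Equiv.Perm (ZMod d × Fin m) // g ∈ wrG d m ∧ IsElliptic d m g},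
        addOrderOf ((g.1 p0).1) = d := by
      intro g
      obtain ⟨⟨a, ha⟩, he⟩ := g.2
      rw [hshift g.1 a ha]
      exact S13.order_shift d m hm g.1 a ha (S13.isElliptic_trans d m g.1 he)
    have hresp : ∀ g₁ g₂ : {g : Equiv.Perm (ZMod d × Fin m) //
          g ∈ wrG d m ∧ IsElliptic d m g},
        (∃ c ∈ wrG d m, c * g₁.1 * c⁻¹ = g₂.1) →
        (⟨(g₁.1 p0).1, Fdef g₁⟩ : {η : ZMod d // addOrderOf η = d})
          = ⟨(g₂.1 p0).1, Fdef g₂⟩ := by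
      rintro g₁ g₂ ⟨c, ⟨b, hb⟩, hcg⟩
      apply Subtype.ext
      obtain ⟨⟨a₁, ha₁⟩, _⟩ := g₁.2
      show (g₁.1 p0).1 = (g₂.1 p0).1
      rw [hshift g₁.1 a₁ ha₁, hconjfst g₁.1 g₂.1 c a₁ b ha₁ hb hcg]
    have hbij : Function.Bijective (Quot.lift
        (fun g : {g : Equiv.Perm (ZMod d × Fin m) // g ∈ wrG d m ∧ IsElliptic d m g} =>
          (⟨(g.1 p0).1, Fdef g⟩ : {η : ZMod d // addOrderOf η = d})) hresp) := by
      constructor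
      · intro q₁ q₂
        induction q₁ using Quot.ind with
        | _ s₁ =>
        induction q₂ using Quot.ind with
        | _ s₂ =>
        intro hFeq
        obtain ⟨⟨a₁, ha₁⟩, he₁⟩ := s₁.2
        obtain ⟨⟨a₂, ha₂⟩, he₂⟩ := s₂.2
        have h1 : (s₁.1 p0).1 = (s₂.1 p0).1 := by
          exact congrArg Subtype.val hFeq
        have hv : a₁ = a₂ := by
          rw [hshift s₁.1 a₁ ha₁, hshift s₂.1 a₂ ha₂] at h1
          exact h1
        subst hv
        have hord₁ := S13.order_shift d m hm s₁.1 a₁ ha₁ (S13.isElliptic_trans d m s₁.1 he₁)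
        obtain ⟨c₁, hc₁, hcg₁⟩ := conj_lemma hd hm wm hwm s₁.1 a₁ ha₁ hord₁
          (S13.isElliptic_trans d m s₁.1 he₁)
        obtain ⟨c₂, hc₂, hcg₂⟩ := conj_lemma hd hm wm hwm s₂.1 a₁ ha₂ hord₁
          (S13.isElliptic_trans d m s₂.1 he₂)
        apply Quot.sound
        refine ⟨c₂ * c₁⁻¹, mul_mem hc₂ (inv_mem hc₁), ?_⟩
        rw [← hcg₁, ← hcg₂]
        group
      · rintro ⟨η, hη⟩
        refine ⟨Quot.mk _ ⟨wrElt d m (fun i => if i = 0 then wm else 1) η,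
          hrepmem η, hrepell η hη⟩, ?_⟩
        apply Subtype.ext
        show ((wrElt d m (fun i => if i = 0 then wm else 1) η) p0).1 = η
        show (0 : ZMod d) + η = η
        rw [zero_add]
    rw [Nat.card_eq_of_bijective _ hbij]
    exact S13.card_order_eq_totient d
  · -- existence and uniqueness of the representative
    intro g hg he
    obtain ⟨a, ha⟩ := hg
    have htr := S13.isElliptic_trans d m g he
    have hord := S13.order_shift d m hm g a ha htr
    obtain ⟨c, hc, hcg⟩ := conj_lemma hd hm wm hwm g a ha hord htr
    refine ⟨a, ⟨hord, c, hc, hcg⟩, ?_⟩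
    rintro η ⟨hη, c', hc', hcg'⟩
    obtain ⟨b, hb⟩ := hc'
    have h1 : (g p0).1 = a := hshift g a ha
    have h2 : (g p0).1 = η :=
      hconjfst (wrElt d m (fun i => if i = 0 then wm else 1) η) g c' η b
        (fun _ => rfl) hb hcg'
    rw [← h2, h1]
end
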